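/- arXiv:1911.02000 — 3 statements merged into one kernel-verified Lean document; each statement's English description precedes it below -/
import Mathlib

section
/- Let F ⊊ H be graphs on vertex set {1,…,k} and e = {1,2} ∈ E(H) \ E(F). Then there exist nonnegative integers a, b with a ≥ 1 and a + b ≤ k! such that for every bipartite graph G₀ of density d, the number of copies of F in the semi-blowup H ⊙_e G₀ (with one vertex per class) equals (a + bd)·|V₁|⋯|V_k|. In particular, n_F(H ⊙_e G₀) ≥ |V₁|⋯|V_k|. -/
open Finset

open scoped Classical

noncomputable section

/-- Number of (ordered) adjacent pairs between `S` and `T`. -/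
def edgeCount {V : Type*} (G : SimpleGraph V) (S T : Finset V) : ℕ :=
  ((S ×ˢ T).filter fun p => G.Adj p.1 p.2).card

/-- Edge density of `G` between `S` and `T`. -/
def density {V : Type*} (G : SimpleGraph V) (S T : Finset V) : ℝ :=
  (edgeCount G S T : ℝ) / ((S.card : ℝ) * (T.card : ℝ))

/-- `ε`-regularity (Szemerédi) of the bipartite graph induced by `G` between `V1` and `V2`. -/
def BipRegular {V : Type*} (G : SimpleGraph V) (V1 V2 : Finset V) (ε : ℝ) : Prop :=
  ∀ S ⊆ V1, ∀ T ⊆ V2, S.Nonempty → T.Nonempty →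
    ε * (V1.card : ℝ) ≤ (S.card : ℝ) → ε * (V2.card : ℝ) ≤ (T.card : ℝ) →
    |density G S T - density G V1 V2| ≤ ε

/-- Number of labeled copies of `F` in `G` with distinct vertices in distinct classes
`P 0, …, P (k-1)` (one vertex in each class, in any arrangement). -/
def labeledCount {k : ℕ} {V : Type*} (F : SimpleGraph (Fin k)) (G : SimpleGraph V)
    (P : Fin k → Finset V) : ℕ :=
  ∑ σ : Equiv.Perm (Fin k),
    ((Fintype.piFinset fun i => P (σ i)).filter
      fun v => ∀ i j, F.Adj i j → G.Adj (v i) (v j)).card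

/-- Number of automorphisms of `F`. -/
def autCount {k : ℕ} (F : SimpleGraph (Fin k)) : ℕ :=
  labeledCount F F fun i => {i}

/-- Number `n_F(G)` of unlabeled copies of `F` in `G` with distinct vertices in distinct
classes (one vertex per class). -/
def nCopies {k : ℕ} {V : Type*} (F : SimpleGraph (Fin k)) (G : SimpleGraph V)
    (P : Fin k → Finset V) : ℝ :=
  (labeledCount F G P : ℝ) / (autCount F : ℝ)

/-- The `(H,F)`-coefficient `c_{H,F}(G) = n_H(G)/n_F(G)` of the `k`-partite graph `G`
with classes `P`. -/
def coeff {k : ℕ} {V : Type*} (H F : SimpleGraph (Fin k)) (G : SimpleGraph V)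
    (P : Fin k → Finset V) : ℝ :=
  nCopies H G P / nCopies F G P

/-- The `k`-partite graph `G` with classes `P` is `ε`-`(H,F)`-regular. -/
def HFRegular {k : ℕ} {V : Type*} (H F : SimpleGraph (Fin k)) (G : SimpleGraph V)
    (P : Fin k → Finset V) (ε : ℝ) : Prop :=
  ∀ S : Fin k → Finset V, (∀ i, S i ⊆ P i) →
    ε * nCopies F G P ≤ nCopies F G S →
    |coeff H F G S - coeff H F G P| ≤ ε

/-- `G`, with classes `P`, is a blowup of `H`. -/
def IsBlowup {k : ℕ} {V : Type*} (G : SimpleGraph V) (H : SimpleGraph (Fin k))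
    (P : Fin k → Finset V) : Prop :=
  (∀ i, (P i).Nonempty) ∧
  (∀ i j, i ≠ j → Disjoint (P i) (P j)) ∧
  (∀ i, ∀ x ∈ P i, ∀ y ∈ P i, ¬ G.Adj x y) ∧
  (∀ i j, i ≠ j → ∀ x ∈ P i, ∀ y ∈ P j, (G.Adj x y ↔ H.Adj i j))

/-- `G`, with classes `P`, is a semi-blowup of `H` along the edge `{i₀, i₁} ∈ E(H)`:
between classes `P i, P j` with `{i,j} ≠ {i₀,i₁}` it is complete or empty bipartite
according to whether `{i,j} ∈ E(H)`, while between `P i₀` and `P i₁` the bipartite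
graph (the graph `G₀`) is arbitrary. -/
def IsSemiBlowup {k : ℕ} {V : Type*} (G : SimpleGraph V) (H : SimpleGraph (Fin k))
    (i₀ i₁ : Fin k) (P : Fin k → Finset V) : Prop :=
  i₀ ≠ i₁ ∧ H.Adj i₀ i₁ ∧
  (∀ i, (P i).Nonempty) ∧
  (∀ i j, i ≠ j → Disjoint (P i) (P j)) ∧
  (∀ i, ∀ x ∈ P i, ∀ y ∈ P i, ¬ G.Adj x y) ∧
  (∀ i j, ({i, j} : Finset (Fin k)) ≠ {i₀, i₁} → i ≠ j →
    ∀ x ∈ P i, ∀ y ∈ P j, (G.Adj x y ↔ H.Adj i j))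

/-- Number of labeled copies of `H` anywhere in `G`. -/
def totalLabeled {k : ℕ} {V : Type*} [Fintype V] (H : SimpleGraph (Fin k))
    (G : SimpleGraph V) : ℕ :=
  (Finset.univ.filter fun v : Fin k → V =>
    Function.Injective v ∧ ∀ i j, H.Adj i j → G.Adj (v i) (v j)).card

/-- Number `n_H(G)` of unlabeled copies of `H` anywhere in `G`. -/
def nCopiesTotal {k : ℕ} {V : Type*} [Fintype V] (H : SimpleGraph (Fin k))
    (G : SimpleGraph V) : ℝ :=
  (totalLabeled H G : ℝ) / (autCount H : ℝ)

/-- The vertex partition `Part` of `G` is `ε`-`(H,F)`-regular: all but at most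
`ε·n_H(G)` copies of `H` in `G` lie in induced `k`-partite subgraphs spanned by `k`
parts of `Part` that are `ε`-`(H,F)`-regular. (Each unlabeled copy lying in an injective
tuple of parts is counted `k!` times among ordered tuples, whence the `1/k!`.) -/
def HFRegularPartition {k : ℕ} {V : Type*} [Fintype V] (H F : SimpleGraph (Fin k))
    (G : SimpleGraph V) (Part : Finset (Finset V)) (ε : ℝ) : Prop :=
  nCopiesTotal H G - (Nat.factorial k : ℝ)⁻¹ *
      ∑ X ∈ (Fintype.piFinset fun _ : Fin k => Part).filter
          (fun X => Function.Injective X ∧ HFRegular H F G X ε),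
        nCopies H G X
    ≤ ε * nCopiesTotal H G

/-- The partition `QPart` is a `δ`-regular (Szemerédi) partition of the bipartite graph
induced by `G` between `V1` and `V2`. -/
def SzemerediPartition {V : Type*} (G : SimpleGraph V) (V1 V2 : Finset V)
    (QPart : Finset (Finset V)) (δ : ℝ) : Prop :=
  ∑ Y ∈ QPart, ∑ Y' ∈ QPart,
      (if Y ⊆ V1 ∧ Y' ⊆ V2 ∧ ¬ BipRegular G Y Y' δ
        then (Y.card : ℝ) * (Y'.card : ℝ) else 0)
    ≤ δ * ((V1.card : ℝ) * (V2.card : ℝ))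

/-- `Part` is a partition of the finite set `U` (into nonempty parts). -/
def IsPartitionOn {V : Type*} (Part : Finset (Finset V)) (U : Finset V) : Prop :=
  (∀ X ∈ Part, X.Nonempty) ∧ (∀ X ∈ Part, X ⊆ U) ∧
  (∀ x ∈ U, ∃! X, X ∈ Part ∧ x ∈ X)

/-- The tower function: `towerNat 0 = 1`, `towerNat (n+1) = 2 ^ towerNat n`. -/
def towerNat : ℕ → ℕ
  | 0 => 1
  | n + 1 => 2 ^ towerNat n


lemma pair_cases' {α : Type*} [DecidableEq α] {i j i₀ i₁ : α} (hij : i ≠ j)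
    (h : ({i, j} : Finset α) = {i₀, i₁}) : (i = i₀ ∧ j = i₁) ∨ (i = i₁ ∧ j = i₀) := by
  have hi : i ∈ ({i₀, i₁} : Finset α) := h ▸ Finset.mem_insert_self _ _
  have hj : j ∈ ({i₀, i₁} : Finset α) := h ▸ (by simp)
  simp only [Finset.mem_insert, Finset.mem_singleton] at hi hj
  rcases hi with h1 | h1 <;> rcases hj with h2 | h2
  · exact absurd (h1.trans h2.symm) hij
  · exact Or.inl ⟨h1, h2⟩
  · exact Or.inr ⟨h1, h2⟩
  · exact absurd (h1.trans h2.symm) hij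

lemma card_dvd_of_mul_closed' {G : Type*} [Group G] [Fintype G] [DecidableEq G]
    (K s : Finset G) (h1 : (1:G) ∈ K) (hmul : ∀ a ∈ K, ∀ b ∈ K, a*b ∈ K)
    (hinv : ∀ a ∈ K, a⁻¹ ∈ K) (hs : ∀ a ∈ s, ∀ b ∈ K, a*b ∈ s) : K.card ∣ s.card := by
  classical
  let Ksub : Subgroup G :=
    { carrier := ↑K
      mul_mem' := fun {a b} ha hb => hmul a ha b hb
      one_mem' := h1
      inv_mem' := fun {a} ha => hinv a ha }
  have hcard : s.card = ∑ q ∈ s.image (QuotientGroup.mk (s := Ksub)),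
      (s.filter fun x => (QuotientGroup.mk x : G ⧸ Ksub) = q).card :=
    Finset.card_eq_sum_card_fiberwise (fun x hx => Finset.mem_image_of_mem _ hx)
  have hfib : ∀ q ∈ s.image (QuotientGroup.mk (s := Ksub)),
      (s.filter fun x => (QuotientGroup.mk x : G ⧸ Ksub) = q).card = K.card := by
    intro q hq
    obtain ⟨σ₀, hσ₀s, hσ₀q⟩ := Finset.mem_image.mp hq
    apply Finset.card_bij' (fun x _ => σ₀⁻¹ * x) (fun τ _ => σ₀ * τ)
    · intro x hx
      simp only [Finset.mem_filter] at hx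
      have : (QuotientGroup.mk σ₀ : G ⧸ Ksub) = QuotientGroup.mk x := by rw [hx.2, hσ₀q]
      have h2 := QuotientGroup.eq.mp this
      simpa [Ksub] using h2
    · intro τ hτ
      simp only [Finset.mem_filter]
      refine ⟨hs σ₀ hσ₀s τ hτ, ?_⟩
      rw [← hσ₀q]
      exact (QuotientGroup.eq.mpr (by rw [inv_mul_cancel_left]; exact hτ)).symm
    · intro x hx; group
    · intro τ hτ; group
  rw [hcard, Finset.sum_congr rfl hfib, Finset.sum_const, smul_eq_mul]
  exact dvd_mul_left _ _

lemma perm_adj_rev {k : ℕ} (F : SimpleGraph (Fin k)) (σ : Equiv.Perm (Fin k))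
    (h : ∀ i j, F.Adj i j → F.Adj (σ i) (σ j)) :
    ∀ i j, F.Adj (σ i) (σ j) → F.Adj i j := by
  have key : ∀ m : ℕ, ∀ i j, F.Adj i j → F.Adj ((σ ^ m) i) ((σ ^ m) j) := by
    intro m
    induction m with
    | zero => simp
    | succ n ih =>
      intro i j hij
      have := h _ _ (ih i j hij)
      simpa [pow_succ', Equiv.Perm.mul_apply] using this
  intro i j hij
  have hn : 0 < orderOf σ := orderOf_pos σ
  have h2 := key (orderOf σ - 1) (σ i) (σ j) hij
  have h3 : ∀ x, (σ ^ (orderOf σ - 1)) (σ x) = x := by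
    intro x
    have : (σ ^ (orderOf σ - 1)) * σ = σ ^ orderOf σ := by
      rw [← pow_succ, Nat.sub_add_cancel hn]
    have h4 : (σ ^ (orderOf σ - 1)) (σ x) = ((σ ^ (orderOf σ - 1)) * σ) x := rfl
    rw [h4, this, pow_orderOf_eq_one]; rfl
  rwa [h3, h3] at h2

lemma autCount_eq_card {k : ℕ} (F : SimpleGraph (Fin k)) :
    autCount F = (Finset.univ.filter fun σ : Equiv.Perm (Fin k) =>
      ∀ i j, F.Adj i j → F.Adj (σ i) (σ j)).card := by
  unfold autCount labeledCount
  have h1 : ∀ σ : Equiv.Perm (Fin k),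
      (Fintype.piFinset fun i => ({σ i} : Finset (Fin k))) = {⇑σ} := by
    intro σ
    ext v
    simp only [Fintype.mem_piFinset, Finset.mem_singleton]
    constructor
    · intro h; funext i; exact h i
    · intro h i; rw [h]
  rw [Finset.card_filter]
  refine Finset.sum_congr rfl fun σ _ => ?_
  rw [h1, Finset.filter_singleton]
  split_ifs with h h' h' <;> simp_all

/-- There are integers `a ≥ 1`, `b ≥ 0` with `a + b ≤ k!` such that for every semi-blowup
of `H` along `e ∈ E(H)\E(F)` with replacement bipartite graph of density `d`,
`n_F = (a + bd)·|V₁|⋯|V_k| ≥ |V₁|⋯|V_k|`. -/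
theorem stmt8 {k : ℕ} (H F : SimpleGraph (Fin k)) (i₀ i₁ : Fin k)
    (hF : F ≤ H) (hFH : F ≠ H) (he : H.Adj i₀ i₁) (heF : ¬ F.Adj i₀ i₁) :
    ∃ a b : ℕ, 1 ≤ a ∧ a + b ≤ Nat.factorial k ∧
      ∀ (V : Type) (G : SimpleGraph V) (P : Fin k → Finset V),
        IsSemiBlowup G H i₀ i₁ P →
          nCopies F G P =
            ((a : ℝ) + (b : ℝ) * density G (P i₀) (P i₁)) * ∏ i, ((P i).card : ℝ) ∧
          (∏ i, ((P i).card : ℝ)) ≤ nCopies F G P := by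
  classical
  set p1 : Equiv.Perm (Fin k) → Prop :=
    fun σ => ∀ i j, F.Adj i j → H.Adj (σ i) (σ j) with hp1def
  set p2 : Equiv.Perm (Fin k) → Prop := fun σ => F.Adj (σ⁻¹ i₀) (σ⁻¹ i₁) with hp2def
  set A : Finset (Equiv.Perm (Fin k)) := Finset.univ.filter fun σ => p1 σ ∧ ¬ p2 σ with hAdef
  set B : Finset (Equiv.Perm (Fin k)) := Finset.univ.filter fun σ => p1 σ ∧ p2 σ with hBdef
  set K : Finset (Equiv.Perm (Fin k)) :=
    Finset.univ.filter fun σ => ∀ i j, F.Adj i j → F.Adj (σ i) (σ j) with hKdef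
  have hK1 : (1 : Equiv.Perm (Fin k)) ∈ K := by simp [hKdef]
  have hKmem : ∀ σ, σ ∈ K ↔ ∀ i j, F.Adj i j → F.Adj (σ i) (σ j) := by
    intro σ; simp [hKdef]
  have hKmul : ∀ a ∈ K, ∀ b ∈ K, a * b ∈ K := by
    intro a ha b hb
    rw [hKmem] at ha hb ⊢
    intro i j hij
    exact ha _ _ (hb _ _ hij)
  have hKinv : ∀ a ∈ K, a⁻¹ ∈ K := by
    intro a ha
    rw [hKmem] at ha ⊢
    intro i j hij
    have := perm_adj_rev F a ha (a⁻¹ i) (a⁻¹ j)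
    simp only [Equiv.Perm.coe_inv, Equiv.apply_symm_apply] at this
    exact this hij
  have hKA : ∀ σ ∈ A, ∀ τ ∈ K, σ * τ ∈ A := by
    intro σ hσ τ hτ
    rw [hKmem] at hτ
    simp only [hAdef, Finset.mem_filter, Finset.mem_univ, true_and] at hσ ⊢
    obtain ⟨h1, h2⟩ := hσ
    constructor
    · intro i j hij
      exact h1 _ _ (hτ _ _ hij)
    · intro hcon
      apply h2
      simp only [hp2def] at hcon ⊢
      have e1 : (σ * τ)⁻¹ i₀ = τ⁻¹ (σ⁻¹ i₀) := by simp [mul_inv_rev]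
      have e2 : (σ * τ)⁻¹ i₁ = τ⁻¹ (σ⁻¹ i₁) := by simp [mul_inv_rev]
      rw [e1, e2] at hcon
      have := hτ _ _ hcon
      simpa using this
  have hKB : ∀ σ ∈ B, ∀ τ ∈ K, σ * τ ∈ B := by
    intro σ hσ τ hτ
    have hτ' := hτ
    rw [hKmem] at hτ'
    simp only [hBdef, Finset.mem_filter, Finset.mem_univ, true_and] at hσ ⊢
    obtain ⟨h1, h2⟩ := hσ
    constructor
    · intro i j hij
      exact h1 _ _ (hτ' _ _ hij)
    · simp only [hp2def] at h2 ⊢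
      have e1 : (σ * τ)⁻¹ i₀ = τ⁻¹ (σ⁻¹ i₀) := by simp [mul_inv_rev]
      have e2 : (σ * τ)⁻¹ i₁ = τ⁻¹ (σ⁻¹ i₁) := by simp [mul_inv_rev]
      rw [e1, e2]
      have := perm_adj_rev F τ hτ' (τ⁻¹ (σ⁻¹ i₀)) (τ⁻¹ (σ⁻¹ i₁))
      simp only [Equiv.Perm.coe_inv, Equiv.apply_symm_apply] at this
      -- need F.Adj (τ⁻¹ x) (τ⁻¹ y): use hKinv
      have hτinv := hKinv τ hτ
      rw [hKmem] at hτinv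
      exact hτinv _ _ h2
  have hdA : K.card ∣ A.card := card_dvd_of_mul_closed' K A hK1 hKmul hKinv hKA
  have hdB : K.card ∣ B.card := card_dvd_of_mul_closed' K B hK1 hKmul hKinv hKB
  have hKpos : 0 < K.card := Finset.card_pos.mpr ⟨1, hK1⟩
  have h1A : (1 : Equiv.Perm (Fin k)) ∈ A := by
    simp only [hAdef, Finset.mem_filter, Finset.mem_univ, true_and, hp1def, hp2def]
    exact ⟨fun i j hij => hF hij, by simpa using heF⟩
  have hApos : 0 < A.card := Finset.card_pos.mpr ⟨1, h1A⟩
  refine ⟨A.card / K.card, B.card / K.card, ?_, ?_, ?_⟩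
  · rw [Nat.one_le_div_iff hKpos]
    exact Nat.le_of_dvd hApos hdA
  · have hdisj : Disjoint A B := by
      rw [Finset.disjoint_left]
      intro σ hσA hσB
      simp only [hAdef, hBdef, Finset.mem_filter] at hσA hσB
      exact hσA.2.2 hσB.2.2
    have hsum : A.card + B.card ≤ Nat.factorial k := by
      rw [← Finset.card_union_of_disjoint hdisj]
      calc (A ∪ B).card ≤ Fintype.card (Equiv.Perm (Fin k)) := Finset.card_le_univ _
        _ = Nat.factorial k := by simp [Fintype.card_perm]
    calc A.card / K.card + B.card / K.card
        ≤ A.card + B.card := Nat.add_le_add (Nat.div_le_self _ _) (Nat.div_le_self _ _)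
      _ ≤ Nat.factorial k := hsum
  intro V G P hSB
  obtain ⟨hne, hadj, hPne, hdis, hind, hrule⟩ := hSB
  set E : ℕ := edgeCount G (P i₀) (P i₁) with hEdef
  set R : ℕ := ∏ j, (if j = i₀ ∨ j = i₁ then 1 else (P j).card) with hRdef
  set N : ℕ := ∏ i, (P i).card with hNdef
  have hkey : labeledCount F G P = A.card * N + B.card * (E * R) := by
    have hzero : ∀ σ : Equiv.Perm (Fin k), ¬ p1 σ →
        ((Fintype.piFinset fun i => P (σ i)).filter
          fun v => ∀ i j, F.Adj i j → G.Adj (v i) (v j)).card = 0 := by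
      intro σ hσ
      simp only [hp1def] at hσ
      push_neg at hσ
      obtain ⟨i, j, hij, hH⟩ := hσ
      rw [Finset.card_eq_zero, Finset.filter_eq_empty_iff]
      intro v hv hcond
      have hvi := Fintype.mem_piFinset.mp hv i
      have hvj := Fintype.mem_piFinset.mp hv j
      have hG := hcond i j hij
      have hσne : σ i ≠ σ j := fun h => hij.ne (σ.injective h)
      have hpair : ({σ i, σ j} : Finset (Fin k)) ≠ {i₀, i₁} := by
        intro hp
        rcases pair_cases' hσne hp with ⟨h1, h2⟩ | ⟨h1, h2⟩
        · exact hH (by rw [h1, h2]; exact hadj)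
        · exact hH (by rw [h1, h2]; exact hadj.symm)
      exact hH ((hrule (σ i) (σ j) hpair hσne (v i) hvi (v j) hvj).mp hG)
    have hAcase : ∀ σ : Equiv.Perm (Fin k), p1 σ → ¬ p2 σ →
        ((Fintype.piFinset fun i => P (σ i)).filter
          fun v => ∀ i j, F.Adj i j → G.Adj (v i) (v j)).card = N := by
      intro σ h1 h2
      simp only [hp1def] at h1
      simp only [hp2def] at h2
      rw [Finset.filter_true_of_mem, Fintype.card_piFinset]
      · exact Equiv.prod_comp σ fun i => (P i).card
      · intro v hv i j hij
        have hvi := Fintype.mem_piFinset.mp hv i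
        have hvj := Fintype.mem_piFinset.mp hv j
        have hσne : σ i ≠ σ j := fun h => hij.ne (σ.injective h)
        have hpair : ({σ i, σ j} : Finset (Fin k)) ≠ {i₀, i₁} := by
          intro hp
          rcases pair_cases' hσne hp with ⟨ha, hb⟩ | ⟨ha, hb⟩
          · refine h2 ?_
            have ei : σ⁻¹ i₀ = i := by rw [← ha]; simp
            have ej : σ⁻¹ i₁ = j := by rw [← hb]; simp
            rw [ei, ej]; exact hij
          · refine h2 ?_
            have ei : σ⁻¹ i₀ = j := by rw [← hb]; simp
            have ej : σ⁻¹ i₁ = i := by rw [← ha]; simp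
            rw [ei, ej]; exact hij.symm
        exact (hrule (σ i) (σ j) hpair hσne (v i) hvi (v j) hvj).mpr (h1 i j hij)
    have hBcase : ∀ σ : Equiv.Perm (Fin k), p1 σ → p2 σ →
        ((Fintype.piFinset fun i => P (σ i)).filter
          fun v => ∀ i j, F.Adj i j → G.Adj (v i) (v j)).card = E * R := by
      intro σ h1 h2
      simp only [hp1def] at h1
      simp only [hp2def] at h2
      set p : Fin k := σ⁻¹ i₀ with hp
      set q : Fin k := σ⁻¹ i₁ with hq
      have hσp : σ p = i₀ := σ.apply_symm_apply i₀
      have hσq : σ q = i₁ := σ.apply_symm_apply i₁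
      have hpq : p ≠ q := by
        intro h; apply hne; rw [← hσp, ← hσq, h]
      have hcondiff : ∀ v ∈ Fintype.piFinset (fun i => P (σ i)),
          ((∀ i j, F.Adj i j → G.Adj (v i) (v j)) ↔ G.Adj (v p) (v q)) := by
        intro v hv
        constructor
        · intro h; exact h p q h2
        · intro hG i j hij
          have hvi := Fintype.mem_piFinset.mp hv i
          have hvj := Fintype.mem_piFinset.mp hv j
          have hσne : σ i ≠ σ j := fun h => hij.ne (σ.injective h)
          by_cases hpair : ({σ i, σ j} : Finset (Fin k)) = {i₀, i₁}
          · rcases pair_cases' hσne hpair with ⟨ha, hb⟩ | ⟨ha, hb⟩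
            · have ei : i = p := σ.injective (by rw [ha, hσp])
              have ej : j = q := σ.injective (by rw [hb, hσq])
              rw [ei, ej]; exact hG
            · have ei : i = q := σ.injective (by rw [ha, hσq])
              have ej : j = p := σ.injective (by rw [hb, hσp])
              rw [ei, ej]; exact hG.symm
          · exact (hrule (σ i) (σ j) hpair hσne (v i) hvi (v j) hvj).mpr (h1 i j hij)
      rw [Finset.filter_congr hcondiff]
      set T := ((P i₀) ×ˢ (P i₁)).filter (fun z => G.Adj z.1 z.2) with hT
      have hTcard : T.card = E := by rw [hEdef]; rfl
      have hmap : ∀ v ∈ (Fintype.piFinset fun i => P (σ i)).filter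
          (fun v => G.Adj (v p) (v q)), (v p, v q) ∈ T := by
        intro v hv
        rw [Finset.mem_filter] at hv
        have h1' := Fintype.mem_piFinset.mp hv.1 p
        have h2' := Fintype.mem_piFinset.mp hv.1 q
        rw [hσp] at h1'
        rw [hσq] at h2'
        simp only [hT, Finset.mem_filter, Finset.mem_product]
        exact ⟨⟨h1', h2'⟩, hv.2⟩
      rw [Finset.card_eq_sum_card_fiberwise hmap]
      have hfiber : ∀ z ∈ T,
          (((Fintype.piFinset fun i => P (σ i)).filter (fun v => G.Adj (v p) (v q))).filter
            fun v => (v p, v q) = z).card = R := by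
        intro z hz
        simp only [hT, Finset.mem_filter, Finset.mem_product] at hz
        obtain ⟨⟨hz1, hz2⟩, hzadj⟩ := hz
        have hset : (((Fintype.piFinset fun i => P (σ i)).filter
              (fun v => G.Adj (v p) (v q))).filter fun v => (v p, v q) = z) =
            Fintype.piFinset (fun i => if i = p then {z.1} else if i = q then {z.2}
              else P (σ i)) := by
          ext v
          simp only [Finset.mem_filter, Fintype.mem_piFinset, Prod.ext_iff]
          constructor
          · rintro ⟨⟨hv, hadj'⟩, h1', h2'⟩
            intro i
            by_cases hip : i = p
            · subst hip; rw [if_pos rfl, Finset.mem_singleton]; exact h1'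
            · by_cases hiq : i = q
              · subst hiq; rw [if_neg hip, if_pos rfl, Finset.mem_singleton]; exact h2'
              · rw [if_neg hip, if_neg hiq]; exact hv i
          · intro hv
            have h1' : v p = z.1 := by
              have := hv p; rw [if_pos rfl, Finset.mem_singleton] at this; exact this
            have h2' : v q = z.2 := by
              have := hv q
              rw [if_neg (Ne.symm hpq), if_pos rfl, Finset.mem_singleton] at this
              exact this
            refine ⟨⟨?_, ?_⟩, h1', h2'⟩
            · intro i
              by_cases hip : i = p
              · subst hip; rw [h1', hσp]; exact hz1
              · by_cases hiq : i = q
                · subst hiq; rw [h2', hσq]; exact hz2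
                · have := hv i; rw [if_neg hip, if_neg hiq] at this; exact this
            · rw [h1', h2']; exact hzadj
        rw [hset, Fintype.card_piFinset, hRdef]
        have hstep : ∀ i : Fin k,
            (if i = p then ({z.1} : Finset V) else if i = q then {z.2} else P (σ i)).card =
              (if σ i = i₀ ∨ σ i = i₁ then 1 else (P (σ i)).card) := by
          intro i
          by_cases hip : i = p
          · subst hip
            rw [if_pos rfl, if_pos (Or.inl hσp), Finset.card_singleton]
          · by_cases hiq : i = q
            · subst hiq
              rw [if_neg hip, if_pos rfl, if_pos (Or.inr hσq), Finset.card_singleton]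
            · have h0 : σ i ≠ i₀ := fun h => hip (σ.injective (by rw [h, hσp]))
              have h1'' : σ i ≠ i₁ := fun h => hiq (σ.injective (by rw [h, hσq]))
              rw [if_neg hip, if_neg hiq, if_neg (by tauto)]
        rw [Finset.prod_congr rfl fun i _ => hstep i]
        exact Equiv.prod_comp σ fun j => if j = i₀ ∨ j = i₁ then 1 else (P j).card
      rw [Finset.sum_congr rfl hfiber, Finset.sum_const, smul_eq_mul, hTcard]
    unfold labeledCount
    rw [← Finset.sum_filter_of_ne (p := p1)
        (fun σ _ hnz => by by_contra hcc; exact hnz (hzero σ hcc)),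
      ← Finset.sum_filter_add_sum_filter_not (Finset.univ.filter p1) p2]
    have e1 : (Finset.univ.filter p1).filter p2 = B := by
      rw [Finset.filter_filter]
    have e2 : (Finset.univ.filter p1).filter (fun σ => ¬ p2 σ) = A := by
      rw [Finset.filter_filter]
    rw [e1, e2]
    have hsB : ∑ σ ∈ B, ((Fintype.piFinset fun i => P (σ i)).filter
          fun v => ∀ i j, F.Adj i j → G.Adj (v i) (v j)).card = B.card * (E * R) :=
      Finset.sum_const_nat fun σ hσ => by
        rw [hBdef, Finset.mem_filter] at hσ
        exact hBcase σ hσ.2.1 hσ.2.2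
    have hsA : ∑ σ ∈ A, ((Fintype.piFinset fun i => P (σ i)).filter
          fun v => ∀ i j, F.Adj i j → G.Adj (v i) (v j)).card = A.card * N :=
      Finset.sum_const_nat fun σ hσ => by
        rw [hAdef, Finset.mem_filter] at hσ
        exact hAcase σ hσ.2.1 hσ.2.2
    rw [hsB, hsA]
    exact Nat.add_comm _ _
  -- real-number facts
  have hc0 : (0:ℝ) < ((P i₀).card : ℝ) := by
    exact_mod_cast Finset.card_pos.mpr (hPne i₀)
  have hc1 : (0:ℝ) < ((P i₁).card : ℝ) := by
    exact_mod_cast Finset.card_pos.mpr (hPne i₁)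
  have hKr : (0:ℝ) < (K.card : ℝ) := by exact_mod_cast hKpos
  have haA : (A.card : ℝ) = (A.card / K.card : ℕ) * K.card := by
    exact_mod_cast (Nat.div_mul_cancel hdA).symm
  have haB : (B.card : ℝ) = (B.card / K.card : ℕ) * K.card := by
    exact_mod_cast (Nat.div_mul_cancel hdB).symm
  have hNsplit : (N : ℝ) = ((P i₀).card : ℝ) * ((P i₁).card : ℝ) * (R : ℝ) := by
    rw [hNdef, hRdef]
    push_cast [apply_ite (Nat.cast : ℕ → ℝ)]
    have hsplit : ∀ i : Fin k, ((P i).card : ℝ) =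
        (if i = i₀ ∨ i = i₁ then ((P i).card : ℝ) else 1) *
          (if i = i₀ ∨ i = i₁ then 1 else ((P i).card : ℝ)) := by
      intro i; split_ifs <;> ring
    rw [Finset.prod_congr rfl (fun i _ => hsplit i), Finset.prod_mul_distrib]
    congr 1
    have hsub : ∏ i ∈ ({i₀, i₁} : Finset (Fin k)),
          (if i = i₀ ∨ i = i₁ then ((P i).card : ℝ) else 1) =
        ∏ i, (if i = i₀ ∨ i = i₁ then ((P i).card : ℝ) else 1) := by
      apply Finset.prod_subset (Finset.subset_univ _)
      intro x _ hx
      rw [if_neg (by simpa using hx)]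
    rw [← hsub, Finset.prod_pair hne]
    simp
  have hdens : density G (P i₀) (P i₁) = (E : ℝ) / (((P i₀).card : ℝ) * ((P i₁).card : ℝ)) := by
    rw [density, hEdef]
  have hauto : (autCount F : ℝ) = (K.card : ℝ) := by
    rw [autCount_eq_card, hKdef]
  have hNr : (∏ i, ((P i).card : ℝ)) = (N : ℝ) := by
    rw [hNdef]; push_cast; ring
  have heq : nCopies F G P =
      (((A.card / K.card : ℕ) : ℝ) + ((B.card / K.card : ℕ) : ℝ) * density G (P i₀) (P i₁)) *
        ∏ i, ((P i).card : ℝ) := by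
    rw [nCopies, hkey, hauto, hdens, hNr]
    push_cast
    rw [hNsplit, haA, haB, div_eq_iff (ne_of_gt hKr)]
    have hdiv : (E:ℝ) / (((P i₀).card : ℝ) * ((P i₁).card : ℝ)) *
        (((P i₀).card : ℝ) * ((P i₁).card : ℝ)) = (E:ℝ) :=
      div_mul_cancel₀ _ (by positivity)
    linear_combination (-(((B.card / K.card : ℕ) : ℝ) * (R:ℝ) * (K.card:ℝ))) * hdiv
  refine ⟨heq, ?_⟩
  rw [heq]
  have hd0 : 0 ≤ density G (P i₀) (P i₁) := by
    rw [hdens]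
    positivity
  have hNpos : (0:ℝ) ≤ ∏ i, ((P i).card : ℝ) := Finset.prod_nonneg fun i _ => Nat.cast_nonneg _
  have ha1 : (1:ℝ) ≤ ((A.card / K.card : ℕ) : ℝ) := by
    have : 1 ≤ A.card / K.card := by
      rw [Nat.one_le_div_iff hKpos]; exact Nat.le_of_dvd hApos hdA
    exact_mod_cast this
  nlinarith [mul_nonneg (mul_nonneg (Nat.cast_nonneg (B.card / K.card)) hd0) hNpos]
end
end

section
/- Let F ⊊ H be graphs on {1,…,k} and e = {1,2} ∈ E(H) \ E(F). For every bipartite graph G₀ of density d, the (H,F)-coefficient of the semi-blowup G = H ⊙_e G₀ equals d/(a+bd), where a = n_F(H−e) ≥ 1 and b = n_F(H) − n_F(H−e) ≥ 0. -/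
open Finset

open scoped Classical

noncomputable section

lemma labeledCount_singleton' {k : ℕ} (K K' : SimpleGraph (Fin k)) :
    labeledCount K K' (fun i => {i}) =
      (univ.filter fun σ : Equiv.Perm (Fin k) =>
        ∀ i j, K.Adj i j → K'.Adj (σ i) (σ j)).card := by
  rw [Finset.card_filter, labeledCount]
  refine Finset.sum_congr rfl fun σ _ => ?_
  have h1 : (Fintype.piFinset fun i => ({σ i} : Finset (Fin k))) = {⇑σ} := by
    ext v
    simp [Fintype.mem_piFinset, funext_iff]
  rw [h1, Finset.filter_singleton]
  split <;> simp

lemma card_filter_adj' {k : ℕ} {V : Type*} (G : SimpleGraph V) (Q : Fin k → Finset V)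
    (a b : Fin k) (hab : a ≠ b) :
    ((Fintype.piFinset Q).filter fun v => G.Adj (v a) (v b)).card =
      edgeCount G (Q a) (Q b) * ∏ i ∈ univ \ {a, b}, (Q i).card := by
  rw [edgeCount,
    Finset.card_eq_sum_card_fiberwise (f := fun v => (v a, v b))
      (t := (Q a ×ˢ Q b).filter fun p => G.Adj p.1 p.2)
      (fun v hv => by
        simp only [Finset.mem_coe, Finset.mem_filter, Fintype.mem_piFinset] at hv ⊢
        exact ⟨Finset.mem_product.2 ⟨hv.1 a, hv.1 b⟩, hv.2⟩)]
  rw [Finset.sum_congr rfl (fun p hp => ?_), Finset.sum_const, smul_eq_mul]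
  simp only [Finset.mem_filter, Finset.mem_product] at hp
  have key : (((Fintype.piFinset Q).filter fun v => G.Adj (v a) (v b)).filter
      fun v => (v a, v b) = p) =
      Fintype.piFinset (fun i => if i = a then {p.1} else if i = b then {p.2} else Q i) := by
    ext v
    simp only [Finset.mem_filter, Fintype.mem_piFinset, Prod.ext_iff]
    constructor
    · rintro ⟨⟨hQ, -⟩, h1, h2⟩ i
      by_cases hia : i = a
      · subst hia; simp [h1]
      by_cases hib : i = b
      · subst hib; simp [Ne.symm hab, h2]
      · simp [hia, hib, hQ i]
    · intro h
      have ha := h a; have hb := h b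
      rw [if_pos rfl, Finset.mem_singleton] at ha
      rw [if_neg (Ne.symm hab), if_pos rfl, Finset.mem_singleton] at hb
      refine ⟨⟨fun i => ?_, ?_⟩, ha, hb⟩
      · by_cases hia : i = a
        · subst hia; rw [ha]; exact hp.1.1
        by_cases hib : i = b
        · subst hib; rw [hb]; exact hp.1.2
        · have := h i; simpa [hia, hib] using this
      · rw [ha, hb]; exact hp.2
  rw [key, Fintype.card_piFinset]
  rw [← Finset.prod_subset (Finset.sdiff_subset : univ \ ({a, b} : Finset (Fin k)) ⊆ univ)
    (fun i _ hi => ?_)]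
  · refine Finset.prod_congr rfl fun i hi => ?_
    simp only [Finset.mem_sdiff, Finset.mem_insert, Finset.mem_singleton] at hi
    push_neg at hi
    simp [hi.2.1, hi.2.2]
  · simp only [Finset.mem_sdiff, Finset.mem_univ, true_and, Finset.mem_insert,
      Finset.mem_singleton, not_not, not_and] at hi
    rcases not_not.mp (by simpa using hi) with rfl | rfl
    · simp
    · simp [Ne.symm hab]

lemma count_semi' {k : ℕ} {V : Type*} (H Hm K : SimpleGraph (Fin k)) (i₀ i₁ : Fin k)
    (G : SimpleGraph V) (P : Fin k → Finset V)
    (hHm : ∀ i j, Hm.Adj i j ↔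
      (H.Adj i j ∧ ¬((i = i₀ ∧ j = i₁) ∨ (i = i₁ ∧ j = i₀))))
    (hsb : IsSemiBlowup G H i₀ i₁ P) (σ : Equiv.Perm (Fin k)) :
    ((Fintype.piFinset fun i => P (σ i)).filter
        fun v => ∀ i j, K.Adj i j → G.Adj (v i) (v j)).card =
      if ∀ i j, K.Adj i j → Hm.Adj (σ i) (σ j) then ∏ i, (P i).card
      else if ∀ i j, K.Adj i j → H.Adj (σ i) (σ j) then
        edgeCount G (P i₀) (P i₁) * ∏ i ∈ univ \ {i₀, i₁}, (P i).card
      else 0 := by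
  obtain ⟨hne, hadj, hPne, hdisj, hloop, hcross⟩ := hsb
  by_cases h1 : ∀ i j, K.Adj i j → Hm.Adj (σ i) (σ j)
  · rw [if_pos h1]
    have : ((Fintype.piFinset fun i => P (σ i)).filter
        fun v => ∀ i j, K.Adj i j → G.Adj (v i) (v j)) = Fintype.piFinset fun i => P (σ i) := by
      refine Finset.filter_true_of_mem fun v hv i j hij => ?_
      have hm := h1 i j hij
      have hH := ((hHm _ _).1 hm).1
      have hpair : ({σ i, σ j} : Finset (Fin k)) ≠ {i₀, i₁} := by
        intro hp
        exact ((hHm _ _).1 hm).2 (pair_cases' hH.ne hp)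
      rw [Fintype.mem_piFinset] at hv
      exact (hcross (σ i) (σ j) hpair hH.ne (v i) (hv i) (v j) (hv j)).2 hH
    rw [this, Fintype.card_piFinset]
    exact Equiv.prod_comp σ fun i => (P i).card
  rw [if_neg h1]
  by_cases h2 : ∀ i j, K.Adj i j → H.Adj (σ i) (σ j)
  · rw [if_pos h2]
    push_neg at h1
    obtain ⟨i, j, hij, hm⟩ := h1
    have hH := h2 i j hij
    rw [hHm, not_and, not_not] at hm
    have hcase := hm hH
    set a := σ.symm i₀ with ha
    set b := σ.symm i₁ with hb
    have hσa : σ a = i₀ := σ.apply_symm_apply i₀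
    have hσb : σ b = i₁ := σ.apply_symm_apply i₁
    have hKab : K.Adj a b := by
      rcases hcase with ⟨h3, h4⟩ | ⟨h3, h4⟩
      · have : a = i ∧ b = j := ⟨σ.injective (by rw [hσa, h3]), σ.injective (by rw [hσb, h4])⟩
        rw [this.1, this.2]; exact hij
      · have : a = j ∧ b = i := ⟨σ.injective (by rw [hσa, h4]), σ.injective (by rw [hσb, h3])⟩
        rw [this.1, this.2]; exact hij.symm
    have hab : a ≠ b := fun h => hne (by rw [← hσa, ← hσb, h])
    have key : ((Fintype.piFinset fun i => P (σ i)).filter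
        fun v => ∀ i j, K.Adj i j → G.Adj (v i) (v j)) =
        ((Fintype.piFinset fun i => P (σ i)).filter fun v => G.Adj (v a) (v b)) := by
      ext v
      simp only [Finset.mem_filter, Fintype.mem_piFinset]
      refine and_congr_right fun hv => ⟨fun h => h a b hKab, fun h i j hij' => ?_⟩
      have hH' := h2 i j hij'
      by_cases hp : ({σ i, σ j} : Finset (Fin k)) = {i₀, i₁}
      · rcases pair_cases' hH'.ne hp with ⟨e1, e2⟩ | ⟨e1, e2⟩
        · have : i = a ∧ j = b := ⟨σ.injective (by rw [hσa, e1]), σ.injective (by rw [hσb, e2])⟩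
          rw [this.1, this.2]; exact h
        · have : i = b ∧ j = a := ⟨σ.injective (by rw [hσb, e1]), σ.injective (by rw [hσa, e2])⟩
          rw [this.1, this.2]; exact h.symm
      · exact (hcross (σ i) (σ j) hp hH'.ne (v i) (hv i) (v j) (hv j)).2 hH'
    rw [key, card_filter_adj' G _ a b hab]
    have hQa : P (σ a) = P i₀ := by rw [hσa]
    have hQb : P (σ b) = P i₁ := by rw [hσb]
    rw [hQa, hQb]
    congr 1
    rw [← Finset.prod_image (f := fun i => (P i).card) (g := σ)
      (fun x _ y _ h => σ.injective h)]
    congr 1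
    ext j
    simp only [Finset.mem_image, Finset.mem_sdiff, Finset.mem_univ, true_and,
      Finset.mem_insert, Finset.mem_singleton]
    constructor
    · rintro ⟨x, hx, rfl⟩
      push_neg at hx ⊢
      exact ⟨fun h => hx.1 (by rw [← hσa] at h; exact σ.injective h),
             fun h => hx.2 (by rw [← hσb] at h; exact σ.injective h)⟩
    · intro hj
      push_neg at hj
      refine ⟨σ.symm j, ?_, σ.apply_symm_apply j⟩
      push_neg
      exact ⟨fun h => hj.1 (σ.symm.injective (h.trans ha)),
             fun h => hj.2 (σ.symm.injective (h.trans hb))⟩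
  · rw [if_neg h2, Finset.card_eq_zero]
    push_neg at h2
    obtain ⟨i, j, hij, hH⟩ := h2
    rw [Finset.filter_eq_empty_iff]
    intro v hv hall
    have hGadj := hall i j hij
    have hne' : σ i ≠ σ j := fun h => hH (False.elim (by
      rw [Fintype.mem_piFinset] at hv
      exact hloop (σ i) (v i) (hv i) (v j) (by rw [h]; exact hv j) hGadj))
    have hp : ({σ i, σ j} : Finset (Fin k)) ≠ {i₀, i₁} := by
      intro hp
      rcases pair_cases' hne' hp with ⟨e1, e2⟩ | ⟨e1, e2⟩
      · rw [e1, e2] at hH; exact hH hadj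
      · rw [e1, e2] at hH; exact hH hadj.symm
    rw [Fintype.mem_piFinset] at hv
    exact hH ((hcross (σ i) (σ j) hp hne' (v i) (hv i) (v j) (hv j)).1 hGadj)

lemma no_hom' {k : ℕ} (H Hm : SimpleGraph (Fin k)) (i₀ i₁ : Fin k) (he : H.Adj i₀ i₁)
    (hHm : ∀ i j, Hm.Adj i j ↔
      (H.Adj i j ∧ ¬((i = i₀ ∧ j = i₁) ∨ (i = i₁ ∧ j = i₀))))
    (σ : Equiv.Perm (Fin k)) : ¬ ∀ i j, H.Adj i j → Hm.Adj (σ i) (σ j) := by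
  intro h
  have hle : Hm ≤ H := fun a b hab => ((hHm a b).1 hab).1
  have himg : H.edgeFinset.image (Sym2.map σ) ⊆ Hm.edgeFinset := by
    intro e' he'
    obtain ⟨e, heH, rfl⟩ := Finset.mem_image.1 he'
    induction e with
    | _ i j =>
      rw [SimpleGraph.mem_edgeFinset, SimpleGraph.mem_edgeSet] at heH
      simpa [SimpleGraph.mem_edgeFinset] using h i j heH
  have hcard : H.edgeFinset.card ≤ Hm.edgeFinset.card := by
    calc H.edgeFinset.card
        = (H.edgeFinset.image (Sym2.map σ)).card :=
          (Finset.card_image_of_injective _ (Sym2.map.injective σ.injective)).symm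
      _ ≤ Hm.edgeFinset.card := Finset.card_le_card himg
  have hss : Hm.edgeFinset ⊂ H.edgeFinset := by
    refine Finset.ssubset_iff_of_subset (SimpleGraph.edgeFinset_mono hle) |>.2 ?_
    refine ⟨s(i₀, i₁), ?_, ?_⟩
    · rwa [SimpleGraph.mem_edgeFinset, SimpleGraph.mem_edgeSet]
    · rw [SimpleGraph.mem_edgeFinset, SimpleGraph.mem_edgeSet]
      intro hm
      exact ((hHm _ _).1 hm).2 (Or.inl ⟨rfl, rfl⟩)
  exact absurd hcard (not_le.2 (Finset.card_lt_card hss))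

lemma labeledCount_semi' {k : ℕ} {V : Type*} (H Hm K : SimpleGraph (Fin k)) (i₀ i₁ : Fin k)
    (G : SimpleGraph V) (P : Fin k → Finset V)
    (hHm : ∀ i j, Hm.Adj i j ↔
      (H.Adj i j ∧ ¬((i = i₀ ∧ j = i₁) ∨ (i = i₁ ∧ j = i₀))))
    (hsb : IsSemiBlowup G H i₀ i₁ P) :
    ∃ c2 : ℕ,
      labeledCount K H (fun i => {i}) = labeledCount K Hm (fun i => {i}) + c2 ∧
      labeledCount K G P = labeledCount K Hm (fun i => {i}) * ∏ i, (P i).card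
        + c2 * (edgeCount G (P i₀) (P i₁) * ∏ i ∈ univ \ {i₀, i₁}, (P i).card) := by
  classical
  have hmH : ∀ a b, Hm.Adj a b → H.Adj a b := fun a b h => ((hHm a b).1 h).1
  refine ⟨(univ.filter fun σ : Equiv.Perm (Fin k) =>
      (∀ i j, K.Adj i j → H.Adj (σ i) (σ j)) ∧
      ¬ ∀ i j, K.Adj i j → Hm.Adj (σ i) (σ j)).card, ?_, ?_⟩
  · rw [labeledCount_singleton', labeledCount_singleton']
    have h2 := Finset.card_filter_add_card_filter_not
      (s := univ.filter fun σ : Equiv.Perm (Fin k) =>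
        ∀ i j, K.Adj i j → H.Adj (σ i) (σ j))
      (p := fun σ => ∀ i j, K.Adj i j → Hm.Adj (σ i) (σ j))
    rw [Finset.filter_filter, Finset.filter_filter] at h2
    have h1 : (univ.filter fun σ : Equiv.Perm (Fin k) =>
        (∀ i j, K.Adj i j → H.Adj (σ i) (σ j)) ∧
        ∀ i j, K.Adj i j → Hm.Adj (σ i) (σ j)) =
        univ.filter fun σ : Equiv.Perm (Fin k) =>
          ∀ i j, K.Adj i j → Hm.Adj (σ i) (σ j) := by
      ext σ
      simp only [Finset.mem_filter, Finset.mem_univ, true_and]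
      exact ⟨fun h => h.2, fun h => ⟨fun i j hij => hmH _ _ (h i j hij), h⟩⟩
    rw [h1] at h2
    omega
  · rw [labeledCount,
      Finset.sum_congr rfl (fun σ _ => count_semi' H Hm K i₀ i₁ G P hHm hsb σ)]
    have step : ∀ σ : Equiv.Perm (Fin k),
        (if ∀ i j, K.Adj i j → Hm.Adj (σ i) (σ j) then ∏ i, (P i).card
          else if ∀ i j, K.Adj i j → H.Adj (σ i) (σ j) then
            edgeCount G (P i₀) (P i₁) * ∏ i ∈ univ \ {i₀, i₁}, (P i).card
          else 0)
        = (if ∀ i j, K.Adj i j → Hm.Adj (σ i) (σ j) then ∏ i, (P i).card else 0)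
          + (if (∀ i j, K.Adj i j → H.Adj (σ i) (σ j)) ∧
              ¬ ∀ i j, K.Adj i j → Hm.Adj (σ i) (σ j) then
              edgeCount G (P i₀) (P i₁) * ∏ i ∈ univ \ {i₀, i₁}, (P i).card else 0) := by
      intro σ
      by_cases h1 : ∀ i j, K.Adj i j → Hm.Adj (σ i) (σ j)
      · rw [if_pos h1, if_pos h1, if_neg (fun hc => hc.2 h1), add_zero]
      · rw [if_neg h1, if_neg h1, zero_add]
        by_cases h2 : ∀ i j, K.Adj i j → H.Adj (σ i) (σ j)
        · rw [if_pos h2, if_pos ⟨h2, h1⟩]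
        · rw [if_neg h2, if_neg (fun hc => h2 hc.1)]
    rw [Finset.sum_congr rfl fun σ _ => step σ, Finset.sum_add_distrib,
      ← Finset.sum_filter, ← Finset.sum_filter, Finset.sum_const, Finset.sum_const,
      smul_eq_mul, smul_eq_mul, labeledCount_singleton']

/-- The `(H,F)`-coefficient of a semi-blowup along `e ∈ E(H)\E(F)` with replacement
density `d` equals `d/(a + bd)`, where `a = n_F(H−e) ≥ 1` and `b = n_F(H) − n_F(H−e) ≥ 0`. -/
theorem stmt9 {k : ℕ} {V : Type*} (H F Hm : SimpleGraph (Fin k)) (i₀ i₁ : Fin k)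
    (G : SimpleGraph V) (P : Fin k → Finset V)
    (hF : F ≤ H) (hFH : F ≠ H) (he : H.Adj i₀ i₁) (heF : ¬ F.Adj i₀ i₁)
    (hHm : ∀ i j, Hm.Adj i j ↔
      (H.Adj i j ∧ ¬((i = i₀ ∧ j = i₁) ∨ (i = i₁ ∧ j = i₀))))
    (hsb : IsSemiBlowup G H i₀ i₁ P) :
    1 ≤ nCopies F Hm (fun i => {i}) ∧
    0 ≤ nCopies F H (fun i => {i}) - nCopies F Hm (fun i => {i}) ∧
    coeff H F G P = density G (P i₀) (P i₁) /
      (nCopies F Hm (fun i => {i}) +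
        (nCopies F H (fun i => {i}) - nCopies F Hm (fun i => {i})) *
          density G (P i₀) (P i₁)) := by
  classical
  have hFHm : ∀ a b, F.Adj a b → Hm.Adj a b := by
    intro a b hab
    rw [hHm]
    refine ⟨hF hab, ?_⟩
    rintro (⟨rfl, rfl⟩ | ⟨rfl, rfl⟩)
    · exact heF hab
    · exact heF hab.symm
  obtain ⟨cF, hcF1, hcF2⟩ := labeledCount_semi' H Hm F i₀ i₁ G P hHm hsb
  obtain ⟨cH, hcH1, hcH2⟩ := labeledCount_semi' H Hm H i₀ i₁ G P hHm hsb
  have hHm0 : labeledCount H Hm (fun i => {i}) = 0 := by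
    rw [labeledCount_singleton', Finset.card_eq_zero, Finset.filter_eq_empty_iff]
    exact fun σ _ => no_hom' H Hm i₀ i₁ hsb.2.1 hHm σ
  have hauH : autCount H = cH := by
    have : labeledCount H H (fun i => {i}) = cH := by rw [hcH1, hHm0, zero_add]
    exact this
  have hlcH : labeledCount H G P = cH * (edgeCount G (P i₀) (P i₁) *
      ∏ i ∈ univ \ {i₀, i₁}, (P i).card) := by
    rw [hcH2, hHm0, zero_mul, zero_add]
  have hA : 0 < autCount F := by
    rw [autCount, labeledCount_singleton', Finset.card_pos]
    exact ⟨1, Finset.mem_filter.2 ⟨Finset.mem_univ _, fun i j h => by simpa using h⟩⟩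
  have hAH : 0 < autCount H := by
    rw [autCount, labeledCount_singleton', Finset.card_pos]
    exact ⟨1, Finset.mem_filter.2 ⟨Finset.mem_univ _, fun i j h => by simpa using h⟩⟩
  have hcHpos : 0 < cH := hauH ▸ hAH
  have haF : autCount F ≤ labeledCount F Hm (fun i => {i}) := by
    rw [autCount, labeledCount_singleton', labeledCount_singleton']
    refine Finset.card_le_card fun σ hσ => ?_
    simp only [Finset.mem_filter, Finset.mem_univ, true_and] at hσ ⊢
    exact fun i j h => hFHm _ _ (hσ i j h)
  have hNfac : ∏ i, (P i).card =
      (∏ i ∈ univ \ {i₀, i₁}, (P i).card) * ((P i₀).card * (P i₁).card) := by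
    rw [← Finset.prod_sdiff (Finset.subset_univ ({i₀, i₁} : Finset (Fin k))),
      Finset.prod_pair hsb.1]
  have hp0 : 0 < (P i₀).card := Finset.card_pos.2 (hsb.2.2.1 i₀)
  have hp1 : 0 < (P i₁).card := Finset.card_pos.2 (hsb.2.2.1 i₁)
  have hM : 0 < ∏ i ∈ univ \ {i₀, i₁}, (P i).card :=
    Finset.prod_pos fun i _ => Finset.card_pos.2 (hsb.2.2.1 i)
  have haN : 0 < labeledCount F Hm (fun i => {i}) := lt_of_lt_of_le hA haF
  refine ⟨?_, ?_, ?_⟩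
  · rw [nCopies, le_div_iff₀ (by exact_mod_cast hA), one_mul]
    exact_mod_cast haF
  · rw [nCopies, nCopies, sub_nonneg]
    refine (div_le_div_iff_of_pos_right (show (0:ℝ) < (autCount F : ℝ) by exact_mod_cast hA)).2 ?_
    exact_mod_cast (by rw [hcF1]; exact Nat.le_add_right _ _ :
      labeledCount F Hm (fun i => {i}) ≤ labeledCount F H (fun i => {i}))
  · simp only [coeff, nCopies, density]
    rw [hlcH, hauH, hcF2, hcF1, hNfac]
    push_cast
    have h0m : (0:ℝ) < ∏ i ∈ univ \ {i₀, i₁}, (((P i).card : ℕ) : ℝ) :=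
      Finset.prod_pos fun i _ => by exact_mod_cast Finset.card_pos.2 (hsb.2.2.1 i)
    have h0p0 : (0:ℝ) < ((P i₀).card : ℝ) := by exact_mod_cast hp0
    have h0p1 : (0:ℝ) < ((P i₁).card : ℝ) := by exact_mod_cast hp1
    have h0A : (0:ℝ) < ((autCount F : ℕ) : ℝ) := by exact_mod_cast hA
    have h0ch : (0:ℝ) < ((cH : ℕ) : ℝ) := by exact_mod_cast hcHpos
    have h0aN : (0:ℝ) < ((labeledCount F Hm (fun i => {i}) : ℕ) : ℝ) := by exact_mod_cast haN
    have h0e : (0:ℝ) ≤ ((edgeCount G (P i₀) (P i₁) : ℕ) : ℝ) := Nat.cast_nonneg _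
    have h0cf : (0:ℝ) ≤ ((cF : ℕ) : ℝ) := Nat.cast_nonneg _
    set e := ((edgeCount G (P i₀) (P i₁) : ℕ) : ℝ) with he'
    set m := ∏ i ∈ univ \ {i₀, i₁}, (((P i).card : ℕ) : ℝ) with hm'
    set p0 := ((P i₀).card : ℝ)
    set p1 := ((P i₁).card : ℝ)
    set A := ((autCount F : ℕ) : ℝ)
    set ch := ((cH : ℕ) : ℝ)
    set aN := ((labeledCount F Hm (fun i => {i}) : ℕ) : ℝ)
    set cf := ((cF : ℕ) : ℝ)
    have hd1 : aN * (m * (p0 * p1)) + cf * (e * m) ≠ 0 :=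
      ne_of_gt (add_pos_of_pos_of_nonneg
        (mul_pos h0aN (mul_pos h0m (mul_pos h0p0 h0p1)))
        (mul_nonneg h0cf (mul_nonneg h0e h0m.le)))
    have hd2 : aN / A + (cf / A) * (e / (p0 * p1)) ≠ 0 :=
      ne_of_gt (add_pos_of_pos_of_nonneg (div_pos h0aN h0A)
        (mul_nonneg (div_nonneg h0cf h0A.le) (div_nonneg h0e (mul_pos h0p0 h0p1).le)))
    have hs : (aN + cf) / A - aN / A = cf / A := by ring
    rw [hs]
    rw [mul_div_assoc', mul_div_cancel_left₀ _ (ne_of_gt h0ch)]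
    field_simp
end
end

section
/- Let F ⊊ H be graphs on {1,…,k} and e = {1,2} ∈ E(H) \ E(F). If the semi-blowup G = H ⊙_e G₀ is ε-(H,F)-regular, then the bipartite graph G₀ is (√ε · k^{2k})-regular. -/
open Finset

open scoped Classical

noncomputable section

section MyAux

open Finset

variable {k : ℕ} {V : Type*}

/-- Counting elements of a product set filtered by a predicate on two coordinates. -/
lemma my_pi_filter_card (R : Fin k → Finset V) (p q : Fin k) (hpq : p ≠ q)
    (Pr : V → V → Prop) :
    ((Fintype.piFinset R).filter fun v => Pr (v p) (v q)).card
      = ((R p ×ˢ R q).filter fun z => Pr z.1 z.2).card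
        * ∏ i ∈ (univ.erase p).erase q, (R i).card := by
  classical
  rw [Finset.card_eq_sum_card_fiberwise
    (f := fun v => (v p, v q)) (t := (R p ×ˢ R q).filter fun z => Pr z.1 z.2)
    (by
      intro v hv
      simp only [Finset.mem_coe, mem_filter, Fintype.mem_piFinset, mem_product] at hv ⊢
      exact ⟨⟨hv.1 p, hv.1 q⟩, hv.2⟩)]
  have hfib : ∀ z ∈ (R p ×ˢ R q).filter fun z => Pr z.1 z.2,
      (((Fintype.piFinset R).filter fun v => Pr (v p) (v q)).filter
        fun v => (v p, v q) = z).card = ∏ i ∈ (univ.erase p).erase q, (R i).card := by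
    rintro ⟨a, b⟩ hz
    simp only [mem_filter, mem_product] at hz
    have hset : (((Fintype.piFinset R).filter fun v => Pr (v p) (v q)).filter
        fun v => (v p, v q) = (a, b))
        = Fintype.piFinset (fun i =>
            if i = p then {a} else if i = q then {b} else R i) := by
      ext v
      simp only [mem_filter, Fintype.mem_piFinset, Prod.mk.injEq]
      constructor
      · rintro ⟨⟨hpi, hPr⟩, hva, hvb⟩
        intro i
        by_cases hip : i = p
        · subst hip; simp [hva]
        · by_cases hiq : i = q
          · subst hiq; simp [hip, hvb]
          · simp [hip, hiq, hpi i]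
      · intro h
        have hvp : v p = a := by have := h p; simpa using this
        have hvq : v q = b := by
          have := h q; rw [if_neg hpq.symm, if_pos rfl] at this
          simpa using this
        refine ⟨⟨?_, ?_⟩, hvp, hvq⟩
        · intro i
          by_cases hip : i = p
          · subst hip; rw [hvp]; exact hz.1.1
          · by_cases hiq : i = q
            · subst hiq; rw [hvq]; exact hz.1.2
            · have := h i; rwa [if_neg hip, if_neg hiq] at this
        · rw [hvp, hvq]; exact hz.2
    rw [hset, Fintype.card_piFinset]
    rw [← Finset.mul_prod_erase univ _ (mem_univ p),
      ← Finset.mul_prod_erase (univ.erase p) _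
        (mem_erase.mpr ⟨hpq.symm, mem_univ q⟩)]
    rw [if_pos rfl, if_neg hpq.symm, if_pos rfl]
    simp only [card_singleton, one_mul]
    refine Finset.prod_congr rfl ?_
    intro i hi
    simp only [mem_erase] at hi
    rw [if_neg hi.2.1, if_neg hi.1]
  rw [Finset.sum_congr rfl hfib, Finset.sum_const, smul_eq_mul]

lemma my_pair_cases (σ : Equiv.Perm (Fin k)) {i j i₀ i₁ : Fin k} (hij : i ≠ j)
    (h : ({σ i, σ j} : Finset (Fin k)) = {i₀, i₁}) :
    (i = σ.symm i₀ ∧ j = σ.symm i₁) ∨ (i = σ.symm i₁ ∧ j = σ.symm i₀) := by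
  have h1 : σ i = i₀ ∨ σ i = i₁ := by
    have : σ i ∈ ({i₀, i₁} : Finset (Fin k)) := h ▸ mem_insert_self _ _
    simpa using this
  have h2 : σ j = i₀ ∨ σ j = i₁ := by
    have : σ j ∈ ({i₀, i₁} : Finset (Fin k)) := by
      rw [← h]; simp
    simpa using this
  have hne : σ i ≠ σ j := fun hc => hij (σ.injective hc)
  have key : ∀ a b : Fin k, σ a = i₀ → σ b = i₁ →
      a = σ.symm i₀ ∧ b = σ.symm i₁ := by
    intro a b ha hb
    constructor
    · rw [← ha]; exact (σ.symm_apply_apply a).symm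
    · rw [← hb]; exact (σ.symm_apply_apply b).symm
  rcases h1 with h1 | h1 <;> rcases h2 with h2 | h2
  · exact absurd (h1.trans h2.symm) hne
  · exact Or.inl (key i j h1 h2)
  · exact Or.inr ⟨(key j i h2 h1).2, (key j i h2 h1).1⟩
  · exact absurd (h1.trans h2.symm) hne

/-- `σ` maps all `J`-edges not sent onto `{i₀,i₁}` to `H`-edges. -/
def GoodPerm (H J : SimpleGraph (Fin k)) (i₀ i₁ : Fin k) (σ : Equiv.Perm (Fin k)) : Prop :=
  ∀ i j, J.Adj i j → ({σ i, σ j} : Finset (Fin k)) ≠ {i₀, i₁} → H.Adj (σ i) (σ j)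

open scoped Classical in
noncomputable def aCnt (H J : SimpleGraph (Fin k)) (i₀ i₁ : Fin k) : ℕ :=
  (univ.filter fun σ : Equiv.Perm (Fin k) =>
    GoodPerm H J i₀ i₁ σ ∧ ¬ J.Adj (σ.symm i₀) (σ.symm i₁)).card

open scoped Classical in
noncomputable def bCnt (H J : SimpleGraph (Fin k)) (i₀ i₁ : Fin k) : ℕ :=
  (univ.filter fun σ : Equiv.Perm (Fin k) =>
    GoodPerm H J i₀ i₁ σ ∧ J.Adj (σ.symm i₀) (σ.symm i₁)).card

end MyAux
section MyAux2

open Finset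

variable {k : ℕ} {V : Type*}

lemma my_labeledCount_semiBlowup (H J : SimpleGraph (Fin k)) (i₀ i₁ : Fin k)
    (G : SimpleGraph V) (P : Fin k → Finset V)
    (hsb : IsSemiBlowup G H i₀ i₁ P) (hJH : J ≤ H)
    (S T : Finset V) (hS : S ⊆ P i₀) (hT : T ⊆ P i₁) :
    labeledCount J G (Function.update (Function.update P i₀ S) i₁ T)
      = (aCnt H J i₀ i₁ * (S.card * T.card) + bCnt H J i₀ i₁ * edgeCount G S T)
        * ∏ i ∈ (univ.erase i₀).erase i₁, (P i).card := by
  classical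
  obtain ⟨hne, heH, hPne, hdis, hloop, hpat⟩ := hsb
  set M := ∏ i ∈ (univ.erase i₀).erase i₁, (P i).card with hM
  set Q := Function.update (Function.update P i₀ S) i₁ T with hQdef
  have hQ1 : Q i₁ = T := Function.update_self _ _ _
  have hQ0 : Q i₀ = S := by
    rw [hQdef, Function.update_of_ne hne, Function.update_self]
  have hQo : ∀ i, i ≠ i₀ → i ≠ i₁ → Q i = P i := by
    intro i h0 h1
    rw [hQdef, Function.update_of_ne h1, Function.update_of_ne h0]
  have hQsub : ∀ i, Q i ⊆ P i := by
    intro i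
    by_cases h0 : i = i₀
    · subst h0; rw [hQ0]; exact hS
    · by_cases h1 : i = i₁
      · subst h1; rw [hQ1]; exact hT
      · rw [hQo i h0 h1]
  have key : ∀ σ : Equiv.Perm (Fin k),
      ((Fintype.piFinset fun i => Q (σ i)).filter
        fun v => ∀ i j, J.Adj i j → G.Adj (v i) (v j)).card
      = if GoodPerm H J i₀ i₁ σ then
          (if J.Adj (σ.symm i₀) (σ.symm i₁)
           then edgeCount G S T * M
           else (S.card * T.card) * M)
        else 0 := by
    intro σ
    by_cases hg : GoodPerm H J i₀ i₁ σ
    · rw [if_pos hg]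
      by_cases hpb : J.Adj (σ.symm i₀) (σ.symm i₁)
      · rw [if_pos hpb]
        have hpq : σ.symm i₀ ≠ σ.symm i₁ := fun hc => hne (by
          have := congrArg σ hc; simpa using this)
        have hfc : ((Fintype.piFinset fun i => Q (σ i)).filter
              fun v => ∀ i j, J.Adj i j → G.Adj (v i) (v j))
            = ((Fintype.piFinset fun i => Q (σ i)).filter
              fun v => G.Adj (v (σ.symm i₀)) (v (σ.symm i₁))) := by
          apply Finset.filter_congr
          intro v hv
          rw [Fintype.mem_piFinset] at hv
          constructor
          · intro h; exact h _ _ hpb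
          · intro hadj i j hij
            by_cases hp : ({σ i, σ j} : Finset (Fin k)) = {i₀, i₁}
            · rcases my_pair_cases σ (J.ne_of_adj hij) hp with ⟨h1, h2⟩ | ⟨h1, h2⟩
              · rw [h1, h2]; exact hadj
              · rw [h1, h2]; exact hadj.symm
            · have hσ : σ i ≠ σ j := fun hc => (J.ne_of_adj hij) (σ.injective hc)
              exact (hpat _ _ hp hσ _ (hQsub _ (hv i)) _ (hQsub _ (hv j))).mpr
                (hg i j hij hp)
        rw [hfc, my_pi_filter_card _ _ _ hpq]
        congr 1
        · rw [σ.apply_symm_apply, σ.apply_symm_apply, hQ0, hQ1, edgeCount]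
        · rw [hM]
          refine Finset.prod_nbij' (fun i => σ i) (fun j => σ.symm j) ?_ ?_ ?_ ?_ ?_
          · intro a ha
            simp only [mem_erase, mem_univ, and_true] at ha ⊢
            constructor
            · intro hc; exact ha.1 (by rw [← hc]; exact (σ.symm_apply_apply a).symm)
            · intro hc; exact ha.2 (by rw [← hc]; exact (σ.symm_apply_apply a).symm)
          · intro b hb
            simp only [mem_erase, mem_univ, and_true] at hb ⊢
            exact ⟨fun hc => hb.1 (σ.symm.injective hc),
              fun hc => hb.2 (σ.symm.injective hc)⟩
          · intro a _; exact σ.symm_apply_apply a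
          · intro b _; exact σ.apply_symm_apply b
          · intro a ha
            simp only [mem_erase, mem_univ, and_true] at ha
            rw [hQo (σ a) (fun hc => ha.2 (by rw [← hc]; exact (σ.symm_apply_apply a).symm))
              (fun hc => ha.1 (by rw [← hc]; exact (σ.symm_apply_apply a).symm))]
      · rw [if_neg hpb]
        rw [Finset.filter_true_of_mem, Fintype.card_piFinset]
        · have : ∏ i, (Q (σ i)).card = ∏ i, (Q i).card :=
            Equiv.prod_comp σ fun i => (Q i).card
          rw [this, ← Finset.mul_prod_erase univ _ (mem_univ i₀),
            ← Finset.mul_prod_erase (univ.erase i₀) _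
              (mem_erase.mpr ⟨Ne.symm hne, mem_univ i₁⟩)]
          have hrest : ∏ i ∈ (univ.erase i₀).erase i₁, (Q i).card = M := by
            rw [hM]
            refine Finset.prod_congr rfl ?_
            intro i hi
            simp only [mem_erase] at hi
            rw [hQo i hi.2.1 hi.1]
          rw [hrest, hQ0, hQ1, ← mul_assoc]
        · intro v hv i j hij
          rw [Fintype.mem_piFinset] at hv
          by_cases hp : ({σ i, σ j} : Finset (Fin k)) = {i₀, i₁}
          · rcases my_pair_cases σ (J.ne_of_adj hij) hp with ⟨h1, h2⟩ | ⟨h1, h2⟩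
            · exact absurd (h1 ▸ h2 ▸ hij) hpb
            · exact absurd (h1 ▸ h2 ▸ hij).symm hpb
          · have hσ : σ i ≠ σ j := fun hc => (J.ne_of_adj hij) (σ.injective hc)
            exact (hpat _ _ hp hσ _ (hQsub _ (hv i)) _ (hQsub _ (hv j))).mpr
              (hg i j hij hp)
    · rw [if_neg hg]
      rw [Finset.card_eq_zero, Finset.eq_empty_iff_forall_notMem]
      intro v hv
      rw [mem_filter, Fintype.mem_piFinset] at hv
      rw [GoodPerm] at hg
      push_neg at hg
      obtain ⟨i, j, hij, hp, hnH⟩ := hg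
      have hσ : σ i ≠ σ j := fun hc => (J.ne_of_adj hij) (σ.injective hc)
      exact hnH ((hpat _ _ hp hσ _ (hQsub _ (hv.1 i)) _ (hQsub _ (hv.1 j))).mp
        (hv.2 i j hij))
  rw [labeledCount, Finset.sum_congr rfl fun σ _ => key σ]
  have split : ∀ σ : Equiv.Perm (Fin k),
      (if GoodPerm H J i₀ i₁ σ then
          (if J.Adj (σ.symm i₀) (σ.symm i₁)
           then edgeCount G S T * M else (S.card * T.card) * M)
        else 0)
      = (if GoodPerm H J i₀ i₁ σ ∧ ¬ J.Adj (σ.symm i₀) (σ.symm i₁)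
          then (S.card * T.card) * M else 0)
        + (if GoodPerm H J i₀ i₁ σ ∧ J.Adj (σ.symm i₀) (σ.symm i₁)
          then edgeCount G S T * M else 0) := by
    intro σ
    by_cases hg : GoodPerm H J i₀ i₁ σ <;>
      by_cases hpb : J.Adj (σ.symm i₀) (σ.symm i₁) <;>
      simp [hg, hpb]
  rw [Finset.sum_congr rfl fun σ _ => split σ, Finset.sum_add_distrib,
    ← Finset.sum_filter, ← Finset.sum_filter, Finset.sum_const, Finset.sum_const,
    smul_eq_mul, smul_eq_mul, ← aCnt, ← bCnt]
  ring

end MyAux2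
section MyAux3

open Finset

variable {k : ℕ} {V : Type*}

lemma my_aCnt_H_eq_zero (H : SimpleGraph (Fin k)) (i₀ i₁ : Fin k) (he : H.Adj i₀ i₁) :
    aCnt H H i₀ i₁ = 0 := by
  classical
  rw [aCnt, Finset.card_eq_zero, Finset.filter_eq_empty_iff]
  rintro σ - hc
  obtain ⟨hg, hn⟩ := hc
  have hom : ∀ i j, H.Adj i j → H.Adj (σ i) (σ j) := by
    intro i j hij
    by_cases hp : ({σ i, σ j} : Finset (Fin k)) = {i₀, i₁}
    · rcases my_pair_cases σ (H.ne_of_adj hij) hp with ⟨h1, h2⟩ | ⟨h1, h2⟩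
      · exact absurd (h1 ▸ h2 ▸ hij) hn
      · exact absurd (h1 ▸ h2 ▸ hij).symm hn
    · exact hg i j hij hp
  have hmap : ∀ e ∈ H.edgeFinset, Sym2.map σ e ∈ H.edgeFinset := by
    intro e he'
    rw [SimpleGraph.mem_edgeFinset] at he' ⊢
    induction e using Sym2.ind with
    | _ a b =>
      rw [Sym2.map_pair_eq]
      rw [SimpleGraph.mem_edgeSet] at he' ⊢
      exact hom a b he'
  have hinj : ∀ (e₁ e₂ : Sym2 (Fin k)), e₁ ∈ H.edgeFinset → e₂ ∈ H.edgeFinset →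
      Sym2.map σ e₁ = Sym2.map σ e₂ → e₁ = e₂ := fun e₁ e₂ _ _ h =>
    Sym2.map.injective σ.injective h
  have hsurj := Finset.surj_on_of_inj_on_of_card_le (s := H.edgeFinset)
    (t := H.edgeFinset) (fun e _ => Sym2.map σ e) hmap hinj le_rfl
  obtain ⟨e, he', hee⟩ := hsurj s(i₀, i₁) (SimpleGraph.mem_edgeFinset.mpr he)
  revert he' hee
  induction e using Sym2.ind with
  | _ a b =>
    intro he' hee
    simp only [Sym2.map_pair_eq] at hee
    rw [SimpleGraph.mem_edgeFinset, SimpleGraph.mem_edgeSet] at he'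
    rw [Sym2.eq_iff] at hee
    rcases hee with ⟨h1, h2⟩ | ⟨h1, h2⟩
    · refine hn ?_
      have ha : σ.symm i₀ = a := by rw [h1, σ.symm_apply_apply]
      have hb : σ.symm i₁ = b := by rw [h2, σ.symm_apply_apply]
      rw [ha, hb]; exact he'
    · refine hn ?_
      have ha : σ.symm i₁ = a := by rw [h2, σ.symm_apply_apply]
      have hb : σ.symm i₀ = b := by rw [h1, σ.symm_apply_apply]
      rw [ha, hb]; exact he'.symm

lemma my_one_le_aCnt_F (H F : SimpleGraph (Fin k)) (i₀ i₁ : Fin k)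
    (hF : F ≤ H) (heF : ¬ F.Adj i₀ i₁) : 1 ≤ aCnt H F i₀ i₁ := by
  classical
  rw [aCnt, Nat.one_le_iff_ne_zero, ← Nat.pos_iff_ne_zero, Finset.card_pos]
  refine ⟨1, ?_⟩
  rw [mem_filter]
  refine ⟨mem_univ _, fun i j hij _ => hF hij, ?_⟩
  exact heF

lemma my_one_le_bCnt_H (H : SimpleGraph (Fin k)) (i₀ i₁ : Fin k)
    (he : H.Adj i₀ i₁) : 1 ≤ bCnt H H i₀ i₁ := by
  classical
  rw [bCnt, Nat.one_le_iff_ne_zero, ← Nat.pos_iff_ne_zero, Finset.card_pos]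
  refine ⟨1, ?_⟩
  rw [mem_filter]
  refine ⟨mem_univ _, fun i j hij _ => hij, ?_⟩
  exact he

lemma my_cnt_add_le (H J : SimpleGraph (Fin k)) (i₀ i₁ : Fin k) :
    aCnt H J i₀ i₁ + bCnt H J i₀ i₁ ≤ Nat.factorial k := by
  classical
  have h1 : aCnt H J i₀ i₁
      = ((univ.filter fun σ : Equiv.Perm (Fin k) => GoodPerm H J i₀ i₁ σ).filter
        fun σ => ¬ J.Adj (σ.symm i₀) (σ.symm i₁)).card := by
    rw [aCnt, Finset.filter_filter]
  have h2 : bCnt H J i₀ i₁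
      = ((univ.filter fun σ : Equiv.Perm (Fin k) => GoodPerm H J i₀ i₁ σ).filter
        fun σ => J.Adj (σ.symm i₀) (σ.symm i₁)).card := by
    rw [bCnt, Finset.filter_filter]
  rw [h1, h2, add_comm, Finset.card_filter_add_card_filter_not]
  calc (univ.filter fun σ : Equiv.Perm (Fin k) => GoodPerm H J i₀ i₁ σ).card
      ≤ (univ : Finset (Equiv.Perm (Fin k))).card := Finset.card_filter_le _ _
    _ = Nat.factorial k := by
        rw [Finset.card_univ, Fintype.card_perm, Fintype.card_fin]

lemma my_one_le_autCount (J : SimpleGraph (Fin k)) : 1 ≤ autCount J := by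
  classical
  rw [autCount, labeledCount, Nat.one_le_iff_ne_zero]
  intro h0
  rw [Finset.sum_eq_zero_iff] at h0
  have h1 := h0 1 (mem_univ 1)
  rw [Finset.card_eq_zero, Finset.eq_empty_iff_forall_notMem] at h1
  refine h1 (fun i => i) ?_
  rw [mem_filter, Fintype.mem_piFinset]
  exact ⟨fun i => by simp, fun i j hij => hij⟩

lemma my_autCount_le (J : SimpleGraph (Fin k)) : autCount J ≤ Nat.factorial k := by
  classical
  rw [autCount, labeledCount]
  refine le_trans (Finset.sum_le_card_nsmul _ _ 1 ?_) ?_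
  · intro σ _
    refine le_trans (Finset.card_filter_le _ _) (le_of_eq ?_)
    rw [Fintype.card_piFinset]; simp
  · rw [smul_eq_mul, mul_one, Finset.card_univ, Fintype.card_perm, Fintype.card_fin]

lemma my_edgeCount_le (G : SimpleGraph V) (S T : Finset V) :
    edgeCount G S T ≤ S.card * T.card := by
  rw [edgeCount, ← Finset.card_product]
  exact Finset.card_filter_le _ _

end MyAux3
section MyArith

lemma my_arith1 (ε δ aF bF KF X rs rt rv1 rv2 E E0 : ℝ)
    (hε : 0 < ε) (haF : 1 ≤ aF) (hbF : 0 ≤ bF) (hsum : aF + bF ≤ KF) (hKX : KF ≤ X)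
    (hδ : 0 ≤ δ) (hδsq : δ * δ = ε * X) (h1 : δ * rv1 ≤ rs) (h2 : δ * rv2 ≤ rt)
    (hrv1 : 1 ≤ rv1) (hrv2 : 1 ≤ rv2) (hE0 : 0 ≤ E0) (hE0' : E0 ≤ rv1 * rv2)
    (hE : 0 ≤ E) :
    ε * (aF * (rv1 * rv2) + bF * E0) ≤ aF * (rs * rt) + bF * E := by
  have hrv10 : (0:ℝ) ≤ rv1 := by linarith
  have hrv20 : (0:ℝ) ≤ rv2 := by linarith
  have hrs : 0 ≤ rs := le_trans (mul_nonneg hδ hrv10) h1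
  have hrt : 0 ≤ rt := le_trans (mul_nonneg hδ hrv20) h2
  have key : (δ * rv1) * (δ * rv2) ≤ rs * rt :=
    mul_le_mul h1 h2 (mul_nonneg hδ hrv20) hrs
  have hrv : (0:ℝ) ≤ rv1 * rv2 := mul_nonneg hrv10 hrv20
  have e1 : ε * (aF * (rv1 * rv2) + bF * E0) ≤ ε * (X * (rv1 * rv2)) := by
    apply mul_le_mul_of_nonneg_left ?_ hε.le
    have b1 : bF * E0 ≤ bF * (rv1 * rv2) := mul_le_mul_of_nonneg_left hE0' hbF
    have b2 : (aF + bF) * (rv1 * rv2) ≤ X * (rv1 * rv2) :=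
      mul_le_mul_of_nonneg_right (hsum.trans hKX) hrv
    nlinarith
  have e2 : ε * (X * (rv1 * rv2)) = (δ * rv1) * (δ * rv2) := by
    have : (δ * rv1) * (δ * rv2) = (δ * δ) * (rv1 * rv2) := by ring
    rw [this, hδsq]; ring
  nlinarith [key, mul_nonneg hrs hrt, mul_nonneg hbF hE]

set_option maxHeartbeats 1600000 in
lemma my_arith2 (ε δ aF bF bH AF AH KF M rs rt rv1 rv2 E E0 : ℝ)
    (hε : 0 < ε) (h_aF : 1 ≤ aF) (h_bF : 0 ≤ bF) (h_bH : 1 ≤ bH)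
    (h_AF : 1 ≤ AF) (h_AH : 1 ≤ AH) (h_AH' : AH ≤ KF) (h_sum : aF + bF ≤ KF)
    (h_M : 1 ≤ M) (h_rs : 1 ≤ rs) (h_rt : 1 ≤ rt) (h_rv1 : 1 ≤ rv1) (h_rv2 : 1 ≤ rv2)
    (h_E : 0 ≤ E) (h_E' : E ≤ rs * rt) (h_E0 : 0 ≤ E0) (h_E0' : E0 ≤ rv1 * rv2)
    (h_fin : ε * (KF * KF * KF) ≤ δ)
    (habs : |bH * E * M / AH / ((aF * (rs * rt) + bF * E) * M / AF)
      - bH * E0 * M / AH / ((aF * (rv1 * rv2) + bF * E0) * M / AF)| ≤ ε) :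
    |E / (rs * rt) - E0 / (rv1 * rv2)| ≤ δ := by
  have hrst : (1:ℝ) ≤ rs * rt := by nlinarith
  have hrv : (1:ℝ) ≤ rv1 * rv2 := by nlinarith
  have hDF1 : (1:ℝ) ≤ aF * (rs * rt) + bF * E := by nlinarith
  have hDF01 : (1:ℝ) ≤ aF * (rv1 * rv2) + bF * E0 := by nlinarith
  have hDFne : aF * (rs * rt) + bF * E ≠ 0 := by linarith
  have hDF0ne : aF * (rv1 * rv2) + bF * E0 ≠ 0 := by linarith
  have hAHne : AH ≠ 0 := by linarith
  have hAFne : AF ≠ 0 := by linarith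
  have hMne : M ≠ 0 := by linarith
  have hKF1 : (1:ℝ) ≤ KF := by linarith
  have hid : bH * E * M / AH / ((aF * (rs * rt) + bF * E) * M / AF)
      - bH * E0 * M / AH / ((aF * (rv1 * rv2) + bF * E0) * M / AF)
      = (AF * bH * aF * (E * (rv1 * rv2) - E0 * (rs * rt)))
        / (AH * ((aF * (rs * rt) + bF * E) * (aF * (rv1 * rv2) + bF * E0))) := by
    field_simp
    ring
  rw [hid] at habs
  have hden_pos : 0 < AH * ((aF * (rs * rt) + bF * E) * (aF * (rv1 * rv2) + bF * E0)) :=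
    mul_pos (by linarith) (mul_pos (by linarith) (by linarith))
  rw [abs_div, abs_of_pos hden_pos, div_le_iff₀ hden_pos] at habs
  have hC0 : (1:ℝ) * 1 ≤ AF * bH := mul_le_mul h_AF h_bH zero_le_one (by linarith)
  have hC1 : (1:ℝ) ≤ AF * bH * aF := by nlinarith
  have hCpos : (0:ℝ) < AF * bH * aF := by linarith
  rw [abs_mul, abs_of_pos hCpos] at habs
  have hnum : |E * (rv1 * rv2) - E0 * (rs * rt)|
      ≤ ε * (AH * ((aF * (rs * rt) + bF * E) * (aF * (rv1 * rv2) + bF * E0))) := by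
    nlinarith [abs_nonneg (E * (rv1 * rv2) - E0 * (rs * rt))]
  have hprod_pos : (0:ℝ) < (rs * rt) * (rv1 * rv2) := by nlinarith
  have hgoal_id : E / (rs * rt) - E0 / (rv1 * rv2)
      = (E * (rv1 * rv2) - E0 * (rs * rt)) / ((rs * rt) * (rv1 * rv2)) := by
    field_simp
  rw [hgoal_id, abs_div, abs_of_pos hprod_pos, div_le_iff₀ hprod_pos]
  have hDFle : aF * (rs * rt) + bF * E ≤ KF * (rs * rt) := by nlinarith
  have hDF0le : aF * (rv1 * rv2) + bF * E0 ≤ KF * (rv1 * rv2) := by nlinarith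
  have t0 : (0:ℝ) ≤ KF * (rs * rt) := by nlinarith
  have t1 : AH * ((aF * (rs * rt) + bF * E) * (aF * (rv1 * rv2) + bF * E0))
      ≤ KF * ((KF * (rs * rt)) * (KF * (rv1 * rv2))) := by
    refine mul_le_mul h_AH' ?_ (by nlinarith) (by linarith)
    exact mul_le_mul hDFle hDF0le (by linarith) t0
  calc |E * (rv1 * rv2) - E0 * (rs * rt)|
      ≤ ε * (AH * ((aF * (rs * rt) + bF * E) * (aF * (rv1 * rv2) + bF * E0))) := hnum
    _ ≤ ε * (KF * ((KF * (rs * rt)) * (KF * (rv1 * rv2)))) :=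
        mul_le_mul_of_nonneg_left t1 hε.le
    _ = (ε * (KF * KF * KF)) * ((rs * rt) * (rv1 * rv2)) := by ring
    _ ≤ δ * ((rs * rt) * (rv1 * rv2)) :=
        mul_le_mul_of_nonneg_right h_fin (by nlinarith)

end MyArith

set_option maxHeartbeats 1600000 in
/-- If a semi-blowup of `H` along `e ∈ E(H)\E(F)` is `ε`-`(H,F)`-regular, then its
replacement bipartite graph is `(√ε·k^{2k})`-regular. -/
theorem stmt10 {k : ℕ} {V : Type*} (H F : SimpleGraph (Fin k)) (i₀ i₁ : Fin k)
    (G : SimpleGraph V) (P : Fin k → Finset V) (ε : ℝ) (hε : 0 < ε)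
    (hF : F ≤ H) (hFH : F ≠ H) (he : H.Adj i₀ i₁) (heF : ¬ F.Adj i₀ i₁)
    (hsb : IsSemiBlowup G H i₀ i₁ P)
    (hreg : HFRegular H F G P ε) :
    BipRegular G (P i₀) (P i₁) (Real.sqrt ε * (k : ℝ) ^ (2 * k)) := by
  classical
  have hne : i₀ ≠ i₁ := hsb.1
  have hPne : ∀ i, (P i).Nonempty := hsb.2.2.1
  have hk : 0 < k := i₀.pos
  set δ := Real.sqrt ε * (k : ℝ) ^ (2 * k) with hδdef
  have hδ0 : 0 ≤ δ := by rw [hδdef]; positivity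
  unfold BipRegular
  intro S hS T hT hSne hTne hScard hTcard
  by_cases hδ1 : 1 ≤ δ
  · have hv10 : (0:ℝ) ≤ ((P i₀).card : ℝ) := Nat.cast_nonneg _
    have hv20 : (0:ℝ) ≤ ((P i₁).card : ℝ) := Nat.cast_nonneg _
    have hSeq : S = P i₀ := by
      refine Finset.eq_of_subset_of_card_le hS ?_
      have h1 : ((P i₀).card : ℝ) ≤ (S.card : ℝ) :=
        le_trans (le_mul_of_one_le_left hv10 hδ1) hScard
      exact_mod_cast h1
    have hTeq : T = P i₁ := by
      refine Finset.eq_of_subset_of_card_le hT ?_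
      have h1 : ((P i₁).card : ℝ) ≤ (T.card : ℝ) :=
        le_trans (le_mul_of_one_le_left hv20 hδ1) hTcard
      exact_mod_cast h1
    rw [hSeq, hTeq, sub_self, abs_zero]
    linarith
  push_neg at hδ1
  -- counting facts
  have haH : aCnt H H i₀ i₁ = 0 := my_aCnt_H_eq_zero H i₀ i₁ he
  have hLF := my_labeledCount_semiBlowup H F i₀ i₁ G P hsb hF S T hS hT
  have hLH := my_labeledCount_semiBlowup H H i₀ i₁ G P hsb le_rfl S T hS hT
  have hLF0 := my_labeledCount_semiBlowup H F i₀ i₁ G P hsb hF (P i₀) (P i₁)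
    (Finset.Subset.refl _) (Finset.Subset.refl _)
  have hLH0 := my_labeledCount_semiBlowup H H i₀ i₁ G P hsb le_rfl (P i₀) (P i₁)
    (Finset.Subset.refl _) (Finset.Subset.refl _)
  simp only [Function.update_eq_self] at hLF0 hLH0
  set Mn := ∏ i ∈ (Finset.univ.erase i₀).erase i₁, (P i).card with hMn
  -- basic real facts
  have hk1 : (1:ℝ) ≤ (k:ℝ) := by exact_mod_cast hk
  have hκ1 : (1:ℝ) ≤ (k:ℝ)^k := by
    have := pow_le_pow_left₀ zero_le_one hk1 k
    rwa [one_pow] at this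
  have hκ21 : (1:ℝ) ≤ (k:ℝ)^(2*k) := by
    have := pow_le_pow_left₀ zero_le_one hk1 (2*k)
    rwa [one_pow] at this
  have hKF1 : (1:ℝ) ≤ (Nat.factorial k : ℝ) := by
    exact_mod_cast Nat.factorial_pos k
  have hKFκ : ((Nat.factorial k : ℕ) : ℝ) ≤ (k:ℝ)^k := by
    have := Nat.factorial_le_pow k
    exact_mod_cast this
  have hκκ2 : (k:ℝ)^k ≤ (k:ℝ)^(2*k) := by
    refine pow_le_pow_right₀ hk1 ?_
    omega
  have hKX : ((Nat.factorial k : ℕ) : ℝ) ≤ (k:ℝ)^(2*k) * (k:ℝ)^(2*k) :=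
    hKFκ.trans (hκκ2.trans (le_mul_of_one_le_left (by linarith) hκ21))
  have hδsq : δ * δ = ε * ((k:ℝ)^(2*k) * (k:ℝ)^(2*k)) := by
    have hsq := Real.mul_self_sqrt hε.le
    rw [hδdef]
    linear_combination ((k:ℝ)^(2*k) * (k:ℝ)^(2*k)) * hsq
  have haF1 : (1:ℝ) ≤ (aCnt H F i₀ i₁ : ℝ) := by
    exact_mod_cast my_one_le_aCnt_F H F i₀ i₁ hF heF
  have hbH1 : (1:ℝ) ≤ (bCnt H H i₀ i₁ : ℝ) := by
    exact_mod_cast my_one_le_bCnt_H H i₀ i₁ he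
  have hsumR : (aCnt H F i₀ i₁ : ℝ) + (bCnt H F i₀ i₁ : ℝ) ≤ (Nat.factorial k : ℝ) := by
    exact_mod_cast my_cnt_add_le H F i₀ i₁
  have hAF1 : (1:ℝ) ≤ (autCount F : ℝ) := by exact_mod_cast my_one_le_autCount F
  have hAH1 : (1:ℝ) ≤ (autCount H : ℝ) := by exact_mod_cast my_one_le_autCount H
  have hAH' : (autCount H : ℝ) ≤ (Nat.factorial k : ℝ) := by
    exact_mod_cast my_autCount_le H
  have hM1 : (1:ℝ) ≤ (Mn : ℝ) := by
    have : 1 ≤ Mn := by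
      rw [hMn]
      exact Finset.one_le_prod' fun i _ => Finset.card_pos.mpr (hPne i)
    exact_mod_cast this
  have hrs1 : (1:ℝ) ≤ (S.card : ℝ) := by
    exact_mod_cast Finset.card_pos.mpr hSne
  have hrt1 : (1:ℝ) ≤ (T.card : ℝ) := by
    exact_mod_cast Finset.card_pos.mpr hTne
  have hrv11 : (1:ℝ) ≤ ((P i₀).card : ℝ) := by
    exact_mod_cast Finset.card_pos.mpr (hPne i₀)
  have hrv21 : (1:ℝ) ≤ ((P i₁).card : ℝ) := by
    exact_mod_cast Finset.card_pos.mpr (hPne i₁)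
  have hE' : (edgeCount G S T : ℝ) ≤ (S.card : ℝ) * (T.card : ℝ) := by
    exact_mod_cast my_edgeCount_le G S T
  have hE0' : (edgeCount G (P i₀) (P i₁) : ℝ) ≤ ((P i₀).card : ℝ) * ((P i₁).card : ℝ) := by
    exact_mod_cast my_edgeCount_le G (P i₀) (P i₁)
  have hAF0 : (0:ℝ) < (autCount F : ℝ) := by linarith
  -- class subsets
  have hQsub : ∀ i, Function.update (Function.update P i₀ S) i₁ T i ⊆ P i := by
    intro i
    by_cases h1 : i = i₁
    · subst h1; rw [Function.update_self]; exact hT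
    · rw [Function.update_of_ne h1]
      by_cases h0 : i = i₀
      · subst h0; rw [Function.update_self]; exact hS
      · rw [Function.update_of_ne h0]
  -- coefficient formulas
  have hcQ : coeff H F G (Function.update (Function.update P i₀ S) i₁ T)
      = (bCnt H H i₀ i₁ : ℝ) * (edgeCount G S T : ℝ) * (Mn : ℝ) / (autCount H : ℝ)
        / (((aCnt H F i₀ i₁ : ℝ) * ((S.card : ℝ) * (T.card : ℝ))
            + (bCnt H F i₀ i₁ : ℝ) * (edgeCount G S T : ℝ)) * (Mn : ℝ) / (autCount F : ℝ)) := by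
    simp only [coeff, nCopies]
    rw [hLH, hLF, haH]
    push_cast
    ring
  have hcP : coeff H F G P
      = (bCnt H H i₀ i₁ : ℝ) * (edgeCount G (P i₀) (P i₁) : ℝ) * (Mn : ℝ) / (autCount H : ℝ)
        / (((aCnt H F i₀ i₁ : ℝ) * (((P i₀).card : ℝ) * ((P i₁).card : ℝ))
            + (bCnt H F i₀ i₁ : ℝ) * (edgeCount G (P i₀) (P i₁) : ℝ)) * (Mn : ℝ)
          / (autCount F : ℝ)) := by
    simp only [coeff, nCopies]
    rw [hLH0, hLF0, haH]
    push_cast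
    ring
  -- regularity condition
  have core := my_arith1 ε δ (aCnt H F i₀ i₁ : ℝ) (bCnt H F i₀ i₁ : ℝ)
    (Nat.factorial k : ℝ) ((k:ℝ)^(2*k) * (k:ℝ)^(2*k))
    (S.card : ℝ) (T.card : ℝ) ((P i₀).card : ℝ) ((P i₁).card : ℝ)
    (edgeCount G S T : ℝ) (edgeCount G (P i₀) (P i₁) : ℝ)
    hε haF1 (Nat.cast_nonneg _) hsumR hKX hδ0 hδsq hScard hTcard hrv11 hrv21
    (Nat.cast_nonneg _) hE0' (Nat.cast_nonneg _)
  have hcond : ε * nCopies F G P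
      ≤ nCopies F G (Function.update (Function.update P i₀ S) i₁ T) := by
    have hFP : nCopies F G P = ((aCnt H F i₀ i₁ : ℝ) * (((P i₀).card : ℝ) * ((P i₁).card : ℝ))
        + (bCnt H F i₀ i₁ : ℝ) * (edgeCount G (P i₀) (P i₁) : ℝ)) * (Mn : ℝ)
          / (autCount F : ℝ) := by
      simp only [nCopies]; rw [hLF0]; push_cast; ring
    have hFQ : nCopies F G (Function.update (Function.update P i₀ S) i₁ T)
        = ((aCnt H F i₀ i₁ : ℝ) * ((S.card : ℝ) * (T.card : ℝ))
        + (bCnt H F i₀ i₁ : ℝ) * (edgeCount G S T : ℝ)) * (Mn : ℝ) / (autCount F : ℝ) := by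
      simp only [nCopies]; rw [hLF]; push_cast; ring
    rw [hFP, hFQ, ← mul_div_assoc, div_le_div_iff₀ hAF0 hAF0]
    have hMA : (0:ℝ) ≤ (Mn : ℝ) * (autCount F : ℝ) :=
      mul_nonneg (by linarith) (by linarith)
    have step := mul_le_mul_of_nonneg_right core hMA
    exact le_trans (le_of_eq (by ring)) (le_trans step (le_of_eq (by ring)))
  have hmain := hreg (Function.update (Function.update P i₀ S) i₁ T) hQsub hcond
  rw [hcQ, hcP] at hmain
  -- final arithmetic bound
  have hκκ : (k:ℝ)^(2*k) = (k:ℝ)^k * (k:ℝ)^k := by rw [two_mul, pow_add]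
  have hfin : ε * ((Nat.factorial k : ℝ) * (Nat.factorial k : ℝ) * (Nat.factorial k : ℝ)) ≤ δ := by
    have hsq := Real.mul_self_sqrt hε.le
    have hδ1' : Real.sqrt ε * ((k:ℝ)^k * (k:ℝ)^k) < 1 := by
      rw [← hκκ, ← hδdef]; exact hδ1
    have h3 : Real.sqrt ε * (k:ℝ)^k ≤ 1 := by
      have hκ0 : (0:ℝ) ≤ (k:ℝ)^k := by positivity
      have t : Real.sqrt ε * (k:ℝ)^k ≤ Real.sqrt ε * ((k:ℝ)^k * (k:ℝ)^k) :=
        mul_le_mul_of_nonneg_left (le_mul_of_one_le_left hκ0 hκ1) (Real.sqrt_nonneg ε)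
      exact t.trans hδ1'.le
    have h0 : (0:ℝ) ≤ (Nat.factorial k : ℝ) := by linarith
    have hs2 : (Nat.factorial k : ℝ) * (Nat.factorial k : ℝ) ≤ (k:ℝ)^k * (k:ℝ)^k :=
      mul_le_mul hKFκ hKFκ h0 (by linarith)
    have hKF3 : (Nat.factorial k : ℝ) * (Nat.factorial k : ℝ) * (Nat.factorial k : ℝ)
        ≤ (k:ℝ)^k * (k:ℝ)^k * (k:ℝ)^k :=
      mul_le_mul hs2 hKFκ h0 (by positivity)
    calc ε * ((Nat.factorial k : ℝ) * (Nat.factorial k : ℝ) * (Nat.factorial k : ℝ))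
        ≤ ε * ((k:ℝ)^k * (k:ℝ)^k * (k:ℝ)^k) := mul_le_mul_of_nonneg_left hKF3 hε.le
      _ = (Real.sqrt ε * ((k:ℝ)^k * (k:ℝ)^k)) * (Real.sqrt ε * (k:ℝ)^k) := by
          linear_combination (-((k:ℝ)^k * (k:ℝ)^k * (k:ℝ)^k)) * hsq
      _ ≤ (Real.sqrt ε * ((k:ℝ)^k * (k:ℝ)^k)) * 1 := by
          refine mul_le_mul_of_nonneg_left h3 ?_
          positivity
      _ = δ := by rw [mul_one, hδdef, hκκ]
  simp only [density]
  exact my_arith2 ε δ (aCnt H F i₀ i₁ : ℝ) (bCnt H F i₀ i₁ : ℝ) (bCnt H H i₀ i₁ : ℝ)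
    (autCount F : ℝ) (autCount H : ℝ) (Nat.factorial k : ℝ) (Mn : ℝ)
    (S.card : ℝ) (T.card : ℝ) ((P i₀).card : ℝ) ((P i₁).card : ℝ)
    (edgeCount G S T : ℝ) (edgeCount G (P i₀) (P i₁) : ℝ)
    hε haF1 (Nat.cast_nonneg _) hbH1 hAF1 hAH1 hAH' hsumR hM1 hrs1 hrt1 hrv11 hrv21
    (Nat.cast_nonneg _) hE' (Nat.cast_nonneg _) hE0' hfin hmain
end
end
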